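/- arXiv:1603.09187 — 3 statements merged into one kernel-verified Lean document; each statement's English description precedes it below -/
import Mathlib

section
/- Let G be a critical graph with chromatic number k+1 for an integer k ≥ 0. Then no separating vertex set of G is a clique of G. In particular, G is connected and has no separating vertex. -/
open SimpleGraph

/-- There exist `n` pairwise edge-disjoint `u`-`v` paths in `G`. -/
def HasEdgeDisjointPaths {V : Type} (G : SimpleGraph V) (u v : V) (n : ℕ) : Prop :=
  ∃ P : Fin n → G.Walk u v, (∀ i, (P i).IsPath) ∧
    ∀ i j, i ≠ j → ∀ e, e ∈ (P i).edges → e ∉ (P j).edges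

/-- The local edge connectivity `λ_G(u,v)`: the maximum number of pairwise
edge-disjoint `u`-`v` paths in `G`. -/
noncomputable def localEdgeConn {V : Type} (G : SimpleGraph V) (u v : V) : ℕ :=
  sSup {n | HasEdgeDisjointPaths G u v n}

/-- The maximum local edge connectivity `λ(G)` (equal to `0` if `G` has at most
one vertex). -/
noncomputable def maxLocalEdgeConn {V : Type} (G : SimpleGraph V) : ℕ :=
  sSup {n | ∃ u v : V, u ≠ v ∧ n = localEdgeConn G u v}

/-- There exist `n` internally vertex-disjoint `u`-`v` paths in `G`. -/
def HasInternallyDisjointPaths {V : Type} (G : SimpleGraph V) (u v : V) (n : ℕ) : Prop :=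
  ∃ P : Fin n → G.Walk u v, (∀ i, (P i).IsPath) ∧
    ∀ i j, i ≠ j → ∀ x, x ∈ (P i).support → x ∈ (P j).support → x = u ∨ x = v

/-- The local connectivity `κ_G(u,v)`. -/
noncomputable def localConn {V : Type} (G : SimpleGraph V) (u v : V) : ℕ :=
  sSup {n | HasInternallyDisjointPaths G u v n}

/-- The maximum local connectivity `κ(G)`. -/
noncomputable def maxLocalConn {V : Type} (G : SimpleGraph V) : ℕ :=
  sSup {n | ∃ u v : V, u ≠ v ∧ n = localConn G u v}

/-- A graph is critical if every proper subgraph has a smaller chromatic number. -/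
def IsCritical {V : Type} (G : SimpleGraph V) : Prop :=
  ∀ H : G.Subgraph, H ≠ ⊤ → H.coe.chromaticNumber < G.chromaticNumber

/-- The number of connected components of `G`. -/
noncomputable def numComponents {V : Type} (G : SimpleGraph V) : ℕ :=
  Nat.card G.ConnectedComponent

/-- `S` is a separating vertex set of `G`: deleting `S` increases the number of
connected components. -/
def IsSepVertexSet {V : Type} (G : SimpleGraph V) (S : Set V) : Prop :=
  numComponents G < numComponents (G.induce Sᶜ)

/-- `F` is a separating edge set of `G`. -/
def IsSepEdgeSet {V : Type} (G : SimpleGraph V) (F : Set (Sym2 V)) : Prop :=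
  numComponents G < numComponents (G.deleteEdges F)

/-- `G` has no separating vertex (cut vertex). -/
def HasNoCutVertex {V : Type} (G : SimpleGraph V) : Prop :=
  ∀ v : V, ¬ IsSepVertexSet G {v}

/-- `B` is a block of `G`: a maximal connected subgraph of `G` without a cut vertex. -/
def IsBlock {V : Type} (G : SimpleGraph V) (B : G.Subgraph) : Prop :=
  B.coe.Connected ∧ HasNoCutVertex B.coe ∧
    ∀ B' : G.Subgraph, B ≤ B' → B'.coe.Connected → HasNoCutVertex B'.coe → B' = B

/-- `G` is a complete graph of order `n`. -/
def IsCompleteOfOrder {V : Type} (G : SimpleGraph V) (n : ℕ) : Prop :=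
  Nat.card V = n ∧ ∀ v w : V, v ≠ w → G.Adj v w

/-- The cycle on `ZMod n`. -/
def cycleGraphZ (n : ℕ) : SimpleGraph (ZMod n) :=
  SimpleGraph.fromRel (fun a b => b = a + 1)

/-- `G` is an odd cycle. -/
def IsOddCycle {V : Type} (G : SimpleGraph V) : Prop :=
  ∃ n : ℕ, Odd n ∧ 3 ≤ n ∧ Nonempty (G ≃g cycleGraphZ n)

/-- The wheel: a cycle of length `n` together with a hub joined to all its vertices. -/
def wheelGraph (n : ℕ) : SimpleGraph (Option (ZMod n)) :=
  SimpleGraph.fromRel (fun a b =>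
    (a = none ∧ b ≠ none) ∨ ∃ x y, a = some x ∧ b = some y ∧ (cycleGraphZ n).Adj x y)

/-- `G` is an odd wheel. -/
def IsOddWheel {V : Type} (G : SimpleGraph V) : Prop :=
  ∃ n : ℕ, Odd n ∧ 3 ≤ n ∧ Nonempty (G ≃g wheelGraph n)

/-- The Hajós join of `G₁` (with edge `v₁w₁`) and `G₂` (with edge `v₂w₂`):
delete the two edges, identify `v₁` with `v₂`, and add the edge `w₁w₂`. -/
def hajosJoin {V₁ V₂ : Type} (G₁ : SimpleGraph V₁) (G₂ : SimpleGraph V₂)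
    (v₁ w₁ : V₁) (v₂ w₂ : V₂) : SimpleGraph {x : V₁ ⊕ V₂ // x ≠ Sum.inr v₂} :=
  SimpleGraph.fromRel (fun a b =>
    (∃ x y : V₁, a.1 = Sum.inl x ∧ b.1 = Sum.inl y ∧ G₁.Adj x y ∧
        ¬(x = v₁ ∧ y = w₁) ∧ ¬(x = w₁ ∧ y = v₁)) ∨
    (∃ x y : V₂, a.1 = Sum.inr x ∧ b.1 = Sum.inr y ∧ G₂.Adj x y) ∨
    (∃ y : V₂, a.1 = Sum.inl v₁ ∧ b.1 = Sum.inr y ∧ G₂.Adj v₂ y ∧ y ≠ w₂) ∨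
    (a.1 = Sum.inl w₁ ∧ b.1 = Sum.inr w₂))

/-- `G` is (isomorphic to) a Hajós join of `G₁` and `G₂`. -/
def IsHajosJoin {V V₁ V₂ : Type} (G : SimpleGraph V) (G₁ : SimpleGraph V₁)
    (G₂ : SimpleGraph V₂) : Prop :=
  ∃ (v₁ w₁ : V₁) (v₂ w₂ : V₂), G₁.Adj v₁ w₁ ∧ G₂.Adj v₂ w₂ ∧
    Nonempty (G ≃g hajosJoin G₁ G₂ v₁ w₁ v₂ w₂)

/-- The class `ℋ_k`: for `k ≠ 2, 3` it contains the complete graphs of order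
`k+1`; `ℋ₂` consists of the odd cycles; `ℋ₃` contains the odd wheels; and for
`k ≥ 3` the class is closed under Hajós joins. -/
inductive HajosClass : (k : ℕ) → {V : Type} → SimpleGraph V → Prop where
  | complete {k : ℕ} {V : Type} (G : SimpleGraph V) (h2 : k ≠ 2) (h3 : k ≠ 3)
      (h : IsCompleteOfOrder G (k + 1)) : HajosClass k G
  | oddCycle {V : Type} (G : SimpleGraph V) (h : IsOddCycle G) : HajosClass 2 G
  | oddWheel {V : Type} (G : SimpleGraph V) (h : IsOddWheel G) : HajosClass 3 G
  | join {k : ℕ} (hk : 3 ≤ k) {V V₁ V₂ : Type} (G : SimpleGraph V)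
      (G₁ : SimpleGraph V₁) (G₂ : SimpleGraph V₂)
      (h₁ : HajosClass k G₁) (h₂ : HajosClass k G₂) (h : IsHajosJoin G G₁ G₂) :
      HajosClass k G

/-- The class `𝒞_k`: critical graphs with chromatic number `k+1` and maximum
local edge connectivity at most `k`. -/
def InCk {V : Type} (G : SimpleGraph V) (k : ℕ) : Prop :=
  IsCritical G ∧ G.chromaticNumber = (k + 1 : ℕ) ∧ maxLocalEdgeConn G ≤ k

/-- Minimum degree (0 for the empty graph). -/
noncomputable def minDeg {V : Type} [Fintype V] (G : SimpleGraph V) : ℕ :=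
  letI := Classical.decEq V
  letI : DecidableRel G.Adj := Classical.decRel _
  G.minDegree

/-- Maximum degree (0 for the empty graph). -/
noncomputable def maxDeg {V : Type} [Fintype V] (G : SimpleGraph V) : ℕ :=
  letI := Classical.decEq V
  letI : DecidableRel G.Adj := Classical.decRel _
  G.maxDegree

/-- The minimum degree of a subgraph of `G`. -/
noncomputable def subgraphMinDeg {V : Type} [Fintype V] {G : SimpleGraph V}
    (H : G.Subgraph) : ℕ :=
  letI : Fintype H.verts := (Set.toFinite H.verts).fintype
  minDeg H.coe

/-- The coloring number `col(G) = 1 + max {δ(H) : H ⊆ G}`. -/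
noncomputable def coloringNumber {V : Type} [Fintype V] (G : SimpleGraph V) : ℕ :=
  1 + sSup (Set.range (subgraphMinDeg (G := G)))

/-- `∂_G(X)`: the set of edges of `G` with exactly one end in `X`. -/
def edgeBoundary {V : Type} (G : SimpleGraph V) (X : Set V) : Set (Sym2 V) :=
  {e | e ∈ G.edgeSet ∧ ∃ x y : V, e = s(x, y) ∧ x ∈ X ∧ y ∉ X}

/-- The vertices of `X` incident with some edge of `F`. -/
def cutVerts {V : Type} (F : Set (Sym2 V)) (X : Set V) : Set V :=
  {x ∈ X | ∃ e ∈ F, x ∈ e}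

/-- The graph obtained from `G` by identifying the vertices `v` and `w`. -/
def identifyVerts {V : Type} (G : SimpleGraph V) (v w : V) :
    SimpleGraph {x : V // x ≠ w} :=
  SimpleGraph.fromRel (fun a b =>
    G.Adj a.1 b.1 ∨ (a.1 = v ∧ G.Adj w b.1) ∨ (b.1 = v ∧ G.Adj w a.1))

/-- The graph obtained from `H` by adding a new vertex joined to all vertices of `T`. -/
def addVertexJoined {W : Type} (H : SimpleGraph W) (T : Set W) : SimpleGraph (Option W) :=
  SimpleGraph.fromRel (fun a b =>
    (∃ x y : W, a = some x ∧ b = some y ∧ H.Adj x y) ∨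
    (a = none ∧ ∃ y ∈ T, b = some y))

/-- `G` is 3-connected: more than 3 vertices and connected after deleting any
set of fewer than 3 vertices. -/
def IsThreeConnected {V : Type} (G : SimpleGraph V) : Prop :=
  3 < Nat.card V ∧ ∀ S : Set V, S.ncard < 3 → (G.induce Sᶜ).Connected

-- permutation extension lemma
lemma exists_perm_comp {k : ℕ} {α : Type} [Fintype α] (a b : α → Fin k)
    (ha : Function.Injective a) (hb : Function.Injective b) :
    ∃ σ : Equiv.Perm (Fin k), ∀ s, σ (a s) = b s := by
  classical
  let A : Set (Fin k) := Set.range a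
  let B : Set (Fin k) := Set.range b
  let e1 : α ≃ A := Equiv.ofInjective a ha
  let e2 : α ≃ B := Equiv.ofInjective b hb
  have hcardA : Fintype.card A = Fintype.card α := (Fintype.card_congr e1).symm
  have hcardB : Fintype.card B = Fintype.card α := (Fintype.card_congr e2).symm
  have hcomp : Fintype.card (↥Aᶜ) = Fintype.card (↥Bᶜ) := by
    rw [Fintype.card_compl_set, Fintype.card_compl_set, hcardA, hcardB]
  let eC : ↥Aᶜ ≃ ↥Bᶜ := Fintype.equivOfCardEq hcomp
  let σ : Equiv.Perm (Fin k) :=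
    (Equiv.Set.sumCompl A).symm.trans (((e1.symm.trans e2).sumCongr eC).trans (Equiv.Set.sumCompl B))
  refine ⟨σ, fun s => ?_⟩
  have h1 : (Equiv.Set.sumCompl A).symm (a s) = Sum.inl ⟨a s, ⟨s, rfl⟩⟩ :=
    Equiv.Set.sumCompl_symm_apply_of_mem (Set.mem_range_self s)
  have h2 : (e1.symm.trans e2) ⟨a s, ⟨s, rfl⟩⟩ = ⟨b s, ⟨s, rfl⟩⟩ := by
    simp only [Equiv.trans_apply]
    have : e1.symm ⟨a s, ⟨s, rfl⟩⟩ = s := by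
      apply e1.injective
      apply Subtype.ext
      have := e1.apply_symm_apply ⟨a s, ⟨s, rfl⟩⟩
      rw [this]
      rfl
    rw [this]; rfl
  show ((Equiv.Set.sumCompl A).symm.trans _) (a s) = b s
  simp only [Equiv.trans_apply, h1, Equiv.sumCongr_apply, Sum.map_inl, h2]
  rfl

lemma core_lemma {V : Type} [Fintype V] (G : SimpleGraph V) (k : ℕ)
    (hcrit : IsCritical G) (hchi : G.chromaticNumber = (↑(k + 1) : ℕ∞))
    (S : Set V) (hS : G.IsClique S)
    (c₁ c₂ : (G.induce Sᶜ).ConnectedComponent) (hne12 : c₁ ≠ c₂) : False := by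
  classical
  let A : (G.induce Sᶜ).ConnectedComponent → Set V := fun c => S ∪ (Subtype.val '' c.supp)
  let H : (G.induce Sᶜ).ConnectedComponent → G.Subgraph := fun c => (⊤ : G.Subgraph).induce (A c)
  have hSsub : ∀ c, S ⊆ A c := fun c => Set.subset_union_left
  have hmemA : ∀ (v : V) (hv : v ∈ Sᶜ),
      v ∈ A ((G.induce Sᶜ).connectedComponentMk ⟨v, hv⟩) := by
    intro v hv
    exact Or.inr ⟨⟨v, hv⟩, by rw [SimpleGraph.ConnectedComponent.mem_supp_iff], rfl⟩
  have hadjH : ∀ c (a b : V) (haa : a ∈ A c) (hbb : b ∈ A c), G.Adj a b →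
      (H c).coe.Adj ⟨a, haa⟩ ⟨b, hbb⟩ := by
    intro c a b haa hbb hab
    rw [SimpleGraph.Subgraph.coe_adj]
    exact ⟨haa, hbb, hab⟩
  have hne_top : ∀ c, H c ≠ ⊤ := by
    intro c heq
    obtain ⟨c', hc'⟩ : ∃ c', c' ≠ c := by
      rcases eq_or_ne c c₁ with rfl | h
      · exact ⟨c₂, fun h => hne12 h.symm⟩
      · exact ⟨c₁, fun h' => h (h'.symm)⟩
    obtain ⟨w, hw⟩ := c'.exists_rep
    have hwA : w.1 ∉ A c := by
      rintro (h | ⟨x, hx, hxe⟩)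
      · exact w.2 h
      · rw [SimpleGraph.ConnectedComponent.mem_supp_iff] at hx
        apply hc'
        rw [← hw, ← hx, Subtype.ext hxe.symm]
        rfl
    have hverts : (H c).verts = Set.univ := by rw [heq]; rfl
    have : w.1 ∈ (H c).verts := hverts ▸ Set.mem_univ _
    exact hwA this
  have hcol : ∀ c, (H c).coe.Colorable k := by
    intro c
    have h1 := hcrit (H c) (hne_top c)
    rw [hchi] at h1
    rw [← SimpleGraph.chromaticNumber_le_iff_colorable]
    have h2 : ((k + 1 : ℕ) : ℕ∞) = (k : ℕ∞) + 1 := by push_cast; ring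
    rw [h2] at h1
    exact (ENat.lt_add_one_iff (by simp)).mp h1
  let f : ∀ c, (H c).coe.Coloring (Fin k) := fun c => (hcol c).some
  let aS : ∀ c, ↥S → Fin k := fun c s => f c ⟨s.1, hSsub c s.2⟩
  have haS : ∀ c, Function.Injective (aS c) := by
    intro c s t h
    by_contra hst
    exact (f c).valid (hadjH c s.1 t.1 (hSsub c s.2) (hSsub c t.2)
      (hS s.2 t.2 (fun h' => hst (Subtype.ext h')))) h
  let g : ↥S → Fin k := aS c₁
  have hperm : ∀ c, ∃ σ : Equiv.Perm (Fin k), ∀ s, σ (aS c s) = g s :=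
    fun c => exists_perm_comp (aS c) g (haS c) (haS c₁)
  let σ : ∀ c, Equiv.Perm (Fin k) := fun c => (hperm c).choose
  have hσ : ∀ c s, σ c (aS c s) = g s := fun c => (hperm c).choose_spec
  let cmp : ∀ v : V, v ∉ S → (G.induce Sᶜ).ConnectedComponent :=
    fun v hv => (G.induce Sᶜ).connectedComponentMk ⟨v, hv⟩
  let col : V → Fin k := fun v =>
    if hv : v ∈ S then g ⟨v, hv⟩
    else σ (cmp v hv) (f (cmp v hv) ⟨v, hmemA v hv⟩)
  have hcol_eq : ∀ (v : V) (hv : v ∉ S) (c : (G.induce Sᶜ).ConnectedComponent)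
      (hcc : cmp v hv = c) (hm : v ∈ A c),
      σ (cmp v hv) (f (cmp v hv) ⟨v, hmemA v hv⟩) = σ c (f c ⟨v, hm⟩) := by
    intro v hv c hcc
    subst hcc
    intro hm
    rfl
  have hvalid : ∀ u v : V, G.Adj u v → col u ≠ col v := by
    intro u v huv
    have hne : u ≠ v := G.ne_of_adj huv
    by_cases hu : u ∈ S <;> by_cases hv : v ∈ S
    · simp only [col, dif_pos hu, dif_pos hv]
      intro h
      exact hne (congrArg Subtype.val (haS c₁ h))
    · simp only [col, dif_pos hu, dif_neg hv]
      rw [← hσ (cmp v hv) ⟨u, hu⟩]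
      intro h
      have h2 := (σ (cmp v hv)).injective h
      exact (f (cmp v hv)).valid
        (hadjH _ u v (hSsub _ hu) (hmemA v hv) huv) h2
    · simp only [col, dif_neg hu, dif_pos hv]
      rw [← hσ (cmp u hu) ⟨v, hv⟩]
      intro h
      have h2 := (σ (cmp u hu)).injective h.symm
      exact (f (cmp u hu)).valid
        (hadjH _ u v (hmemA u hu) (hSsub _ hv) huv) h2.symm
    · have hKadj : (G.induce Sᶜ).Adj ⟨u, hu⟩ ⟨v, hv⟩ := by
        simp only [SimpleGraph.comap_adj, Function.Embedding.coe_subtype]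
        exact huv
      have hcc : cmp v hv = cmp u hu :=
        (SimpleGraph.ConnectedComponent.sound hKadj.reachable).symm
      have hmv : v ∈ A (cmp u hu) := hcc ▸ hmemA v hv
      simp only [col, dif_neg hu, dif_neg hv]
      rw [hcol_eq v hv (cmp u hu) hcc hmv]
      intro h
      have h2 := (σ (cmp u hu)).injective h
      exact (f (cmp u hu)).valid (hadjH _ u v (hmemA u hu) hmv huv) h2
  have hcolorable : G.Colorable k := ⟨SimpleGraph.Coloring.mk col (fun h => hvalid _ _ h)⟩
  have hle := SimpleGraph.chromaticNumber_le_iff_colorable.mpr hcolorable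
  rw [hchi] at hle
  have : k + 1 ≤ k := by exact_mod_cast hle
  omega


/-- In a critical graph with chromatic number `k+1`, no
separating vertex set is a clique; in particular the graph is connected and has
no separating vertex. -/
theorem critical_no_clique_separator {V : Type} [Fintype V] (G : SimpleGraph V) (k : ℕ)
    (hcrit : IsCritical G) (hchi : G.chromaticNumber = (↑(k + 1) : ℕ∞)) :
    (∀ S : Set V, IsSepVertexSet G S → ¬ G.IsClique S) ∧
    G.Connected ∧ HasNoCutVertex G := by
  classical
  have hVne : Nonempty V := by
    by_contra h
    have : IsEmpty V := not_nonempty_iff.mp h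
    have hc : G.Colorable 0 := ⟨SimpleGraph.Coloring.mk (fun v => isEmptyElim v)
      (fun {u} => isEmptyElim u)⟩
    have := SimpleGraph.chromaticNumber_le_iff_colorable.mpr hc
    rw [hchi] at this
    have : k + 1 ≤ 0 := by exact_mod_cast this
    omega
  have part1 : ∀ S : Set V, IsSepVertexSet G S → ¬ G.IsClique S := by
    intro S hsep hclique
    have h1 : 1 ≤ numComponents G := by
      have : Nonempty G.ConnectedComponent := ⟨G.connectedComponentMk hVne.some⟩
      exact Nat.one_le_iff_ne_zero.mpr (Nat.card_ne_zero.mpr ⟨this, Quot.finite _⟩)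
    have h2 : 1 < numComponents (G.induce Sᶜ) := lt_of_le_of_lt h1 hsep
    have : Finite (G.induce Sᶜ).ConnectedComponent := Quot.finite _
    have hnt : Nontrivial (G.induce Sᶜ).ConnectedComponent :=
      Finite.one_lt_card_iff_nontrivial.mp h2
    obtain ⟨c₁, c₂, hne⟩ := hnt
    exact core_lemma G k hcrit hchi S hclique c₁ c₂ hne
  refine ⟨part1, ?_, ?_⟩
  · rw [SimpleGraph.connected_iff]
    refine ⟨?_, hVne⟩
    intro u v
    by_contra hur
    have hu : u ∈ (∅ : Set V)ᶜ := by simp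
    have hv : v ∈ (∅ : Set V)ᶜ := by simp
    have hne : (G.induce (∅ : Set V)ᶜ).connectedComponentMk ⟨u, hu⟩ ≠
        (G.induce (∅ : Set V)ᶜ).connectedComponentMk ⟨v, hv⟩ := by
      intro h
      have hr := SimpleGraph.ConnectedComponent.exact h
      let hhom : G.induce (∅ : Set V)ᶜ →g G :=
        ⟨Subtype.val, fun {a b} hab => hab⟩
      exact hur (hr.map hhom)
    exact core_lemma G k hcrit hchi ∅ SimpleGraph.isClique_empty _ _ hne
  · intro v hsep
    exact part1 {v} hsep (SimpleGraph.isClique_singleton v)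
end

section
/- Let G be a critical graph with chromatic number k+1 for an integer k ≥ 0. Then for any two distinct vertices v and w of G, λ_G(v,w) ≥ k; consequently, G is k-edge-connected. -/
open SimpleGraph

namespace CritAux

open SimpleGraph Finset List

set_option linter.unusedSectionVars false
set_option maxHeartbeats 1600000

section Flow

variable {V : Type} [Fintype V] [DecidableEq V]


set_option linter.unusedSectionVars false

variable {V : Type} [Fintype V] [DecidableEq V]

/-- Excess of a flow at a vertex. -/
def exc (f : V → V → ℕ) (u : V) : ℤ := ∑ v, (f v u : ℤ) - ∑ v, (f u v : ℤ)

/-- Single-entry update. -/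
def upd (f : V → V → ℕ) (x y : V) (n : ℕ) : V → V → ℕ :=
  fun u v => if u = x ∧ v = y then n else f u v

lemma upd_same (f : V → V → ℕ) (x y n) : upd f x y n x y = n := by simp [upd]

lemma upd_ne (f : V → V → ℕ) (x y n) {u v} (h : ¬(u = x ∧ v = y)) :
    upd f x y n u v = f u v := by simp [upd, h]

lemma sum_eq_of_eq_off (g g' : V → ℤ) (y : V) (h : ∀ v, v ≠ y → g' v = g v) :
    ∑ v, g' v = ∑ v, g v + (g' y - g y) := by
  rw [← Finset.add_sum_erase Finset.univ g' (Finset.mem_univ y),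
      ← Finset.add_sum_erase Finset.univ g (Finset.mem_univ y)]
  rw [Finset.sum_congr rfl (fun v hv => h v (Finset.ne_of_mem_erase hv))]
  ring

lemma exc_upd (f : V → V → ℕ) (x y : V) (n : ℕ) (u : V) :
    exc (upd f x y n) u =
      exc f u + (if u = y then ((n:ℤ) - f x y) else 0)
        - (if u = x then ((n:ℤ) - f x y) else 0) := by
  have hin : ∑ v, ((upd f x y n) v u : ℤ) =
      ∑ v, (f v u : ℤ) + (if u = y then ((n:ℤ) - f x y) else 0) := by
    by_cases hu : u = y
    · subst hu
      have := sum_eq_of_eq_off (fun v => (f v u : ℤ)) (fun v => ((upd f x u n) v u : ℤ)) x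
        (fun v hv => by show ((upd f x u n v u : ℕ) : ℤ) = _
                        rw [upd_ne f x u n (by rintro ⟨rfl, -⟩; exact hv rfl)])
      rw [this]
      simp [upd_same]
    · simp only [if_neg hu, add_zero]
      apply Finset.sum_congr rfl
      intro v _
      rw [upd_ne]
      rintro ⟨rfl, rfl⟩; exact hu rfl
  have hout : ∑ v, ((upd f x y n) u v : ℤ) =
      ∑ v, (f u v : ℤ) + (if u = x then ((n:ℤ) - f x y) else 0) := by
    by_cases hu : u = x
    · subst hu
      have := sum_eq_of_eq_off (fun v => (f u v : ℤ)) (fun v => ((upd f u y n) u v : ℤ)) y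
        (fun v hv => by show ((upd f u y n u v : ℕ) : ℤ) = _
                        rw [upd_ne f u y n (by rintro ⟨-, rfl⟩; exact hv rfl)])
      rw [this]
      simp [upd_same]
    · simp only [if_neg hu, add_zero]
      apply Finset.sum_congr rfl
      intro v _
      rw [upd_ne]
      rintro ⟨rfl, rfl⟩; exact hu rfl
  unfold exc
  rw [hin, hout]
  ring

lemma exc_sum (f : V → V → ℕ) (S : Finset V) :
    ∑ u ∈ S, exc f u = ∑ u ∈ S, ∑ v ∈ Sᶜ, ((f v u : ℤ) - f u v) := by
  have h1 : ∀ u, exc f u = ∑ v, ((f v u : ℤ) - f u v) := by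
    intro u; unfold exc; rw [Finset.sum_sub_distrib]
  have h2 : ∀ u, exc f u
      = ∑ v ∈ S, ((f v u : ℤ) - f u v) + ∑ v ∈ Sᶜ, ((f v u : ℤ) - f u v) := by
    intro u; rw [h1, ← Finset.sum_add_sum_compl S]
  rw [Finset.sum_congr rfl (fun u _ => h2 u), Finset.sum_add_distrib]
  have hz : ∑ u ∈ S, ∑ v ∈ S, ((f v u : ℤ) - f u v) = 0 := by
    rw [Finset.sum_congr rfl (fun u _ => Finset.sum_sub_distrib _ _),
      Finset.sum_sub_distrib,
      Finset.sum_comm (s := S) (t := S) (f := fun u v => (f v u : ℤ)), sub_self]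
  rw [hz, zero_add]





lemma chain_imp_mem {R R' : V → V → Prop} :
    ∀ (l : List V) (a : V), List.Chain R a l →
      (∀ x y, x ∈ a :: l → y ∈ a :: l → R x y → R' x y) → List.Chain R' a l := by
  intro l
  induction l with
  | nil => intro a _ _; exact List.Chain.nil
  | cons c l ih =>
    intro a hc h
    unfold List.Chain at hc ⊢
    rw [List.chain_cons] at hc ⊢
    refine ⟨h a c (by simp) (by simp) hc.1, ih c hc.2 ?_⟩
    intro x y hx hy
    exact h x y (by simp at hx ⊢; tauto) (by simp at hy ⊢; tauto)

lemma exists_nodup_chain {R : V → V → Prop} :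
    ∀ (n : ℕ) (l : List V) (a b : V), l.length ≤ n → List.Chain R a l →
      (a :: l).getLast (List.cons_ne_nil _ _) = b →
      ∃ l', List.Chain R a l' ∧ (a :: l').Nodup ∧
        (a :: l').getLast (List.cons_ne_nil _ _) = b ∧ ∀ x ∈ l', x ∈ l := by
  intro n
  induction n with
  | zero =>
    intro l a b hl _ hb
    rw [List.length_eq_zero_iff.mp (Nat.le_zero.mp hl)] at hb
    exact ⟨[], List.Chain.nil, List.nodup_singleton a, hb, by simp⟩
  | succ n ih =>
    intro l a b hl hc hb
    by_cases ha : a ∈ l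
    · obtain ⟨l₁, l₂, rfl⟩ := List.append_of_mem ha
      have hc₂ : List.Chain R a l₂ := (List.isChain_cons_split.mp hc).2
      have hb₂ : (a :: l₂).getLast (List.cons_ne_nil _ _) = b := by
        rw [← hb]
        exact (List.getLast_append_right (l := a :: l₁) (List.cons_ne_nil a l₂)).symm
      have hlen : l₂.length ≤ n := by
        simp only [List.length_append, List.length_cons] at hl
        omega
      obtain ⟨l', h1, h2, h3, h4⟩ := ih l₂ a b hlen hc₂ hb₂
      exact ⟨l', h1, h2, h3, fun x hx => by simp [h4 x hx]⟩
    · cases l with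
      | nil => exact ⟨[], List.Chain.nil, List.nodup_singleton a, hb, by simp⟩
      | cons c l₂ =>
        unfold List.Chain at hc
        rw [List.chain_cons] at hc
        have hb₂ : (c :: l₂).getLast (List.cons_ne_nil _ _) = b := by
          rw [← hb, List.getLast_cons_cons]
        have hlen : l₂.length ≤ n := by simp at hl; omega
        obtain ⟨l', h1, h2, h3, h4⟩ := ih l₂ c b hlen hc.2 hb₂
        refine ⟨c :: l', List.chain_cons.mpr ⟨hc.1, h1⟩, ?_, ?_, ?_⟩
        · rw [List.nodup_cons]
          refine ⟨?_, h2⟩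
          intro hmem
          rcases List.mem_cons.mp hmem with rfl | hmem'
          · exact ha (by simp)
          · exact ha (by simp [h4 a hmem'])
        · rw [List.getLast_cons_cons]; exact h3
        · intro x hx
          rcases List.mem_cons.mp hx with rfl | hx'
          · simp
          · simp [h4 x hx']


section WithGraph

variable (G : SimpleGraph V) [DecidableRel G.Adj]




lemma noc_mono {f f' : V → V → ℕ} (hle : ∀ u v, f' u v ≤ f u v)
    (h : ∀ u v, f u v = 0 ∨ f v u = 0) : ∀ u v, f' u v = 0 ∨ f' v u = 0 := by
  intro u v
  rcases h u v with h0 | h0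
  · exact Or.inl (Nat.le_zero.mp (h0 ▸ hle u v))
  · exact Or.inr (Nat.le_zero.mp (h0 ▸ hle v u))

/-- Augmenting along a nodup residual path. -/
lemma aug_chain :
    ∀ (l : List V) (a : V) (f : V → V → ℕ),
      (∀ u v, f u v ≤ 1) → (∀ u v, f u v ≠ 0 → G.Adj u v) →
      (∀ u v, f u v = 0 ∨ f v u = 0) →
      List.Chain (fun u v => G.Adj u v ∧ f u v = 0) a l → (a :: l).Nodup →
      ∀ b, (a :: l).getLast (List.cons_ne_nil _ _) = b →
      ∃ f', (∀ u v, f' u v ≤ 1) ∧ (∀ u v, f' u v ≠ 0 → G.Adj u v) ∧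
        (∀ u v, f' u v = 0 ∨ f' v u = 0) ∧
        (∀ u, exc f' u = exc f u + (if u = b then 1 else 0) - (if u = a then 1 else 0)) := by
  intro l
  induction l with
  | nil =>
    intro a f h1 h2 h3 _ _ b hb
    simp only [List.getLast_singleton'] at hb
    subst hb
    exact ⟨f, h1, h2, h3, fun u => by ring⟩
  | cons c l ih =>
    intro a f h1 h2 h3 hc hnd b hb
    unfold List.Chain at hc
    rw [List.chain_cons] at hc
    obtain ⟨⟨hadj, hf0⟩, hchain⟩ := hc
    have hac : a ≠ c := G.ne_of_adj hadj
    have hanotin : a ∉ c :: l := (List.nodup_cons.mp hnd).1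
    have hndcl : (c :: l).Nodup := (List.nodup_cons.mp hnd).2
    have hb' : (c :: l).getLast (List.cons_ne_nil _ _) = b := by
      rw [← hb, List.getLast_cons_cons]
    -- choose the single-edge update
    by_cases hca : f c a = 0
    · -- add forward flow on (a, c)
      set f₁ := upd f a c 1 with hf₁
      have h1' : ∀ u v, f₁ u v ≤ 1 := by
        intro u v
        by_cases h : u = a ∧ v = c
        · obtain ⟨rfl, rfl⟩ := h; rw [hf₁, upd_same]
        · rw [hf₁, upd_ne f _ _ _ h]; exact h1 u v
      have h2' : ∀ u v, f₁ u v ≠ 0 → G.Adj u v := by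
        intro u v hne
        by_cases h : u = a ∧ v = c
        · obtain ⟨rfl, rfl⟩ := h; exact hadj
        · rw [hf₁, upd_ne f _ _ _ h] at hne; exact h2 u v hne
      have h3' : ∀ u v, f₁ u v = 0 ∨ f₁ v u = 0 := by
        intro u v
        by_cases h : u = a ∧ v = c
        · obtain ⟨rfl, rfl⟩ := h
          right
          rw [hf₁, upd_ne f _ _ _ (by rintro ⟨rfl, -⟩; exact hac rfl)]
          exact hca
        · by_cases h' : v = a ∧ u = c
          · obtain ⟨rfl, rfl⟩ := h'
            left
            rw [hf₁, upd_ne f _ _ _ h]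
            exact hca
          · rw [hf₁, upd_ne f _ _ _ h, upd_ne f _ _ _ h']
            exact h3 u v
      have hchain' : List.Chain (fun u v => G.Adj u v ∧ f₁ u v = 0) c l := by
        refine chain_imp_mem l c hchain ?_
        intro x y hx _ ⟨hxy, hxy0⟩
        refine ⟨hxy, ?_⟩
        rw [hf₁, upd_ne f _ _ _ (by rintro ⟨rfl, -⟩; exact hanotin hx)]
        exact hxy0
      obtain ⟨f', g1, g2, g3, g4⟩ := ih c f₁ h1' h2' h3' hchain' hndcl b hb'
      refine ⟨f', g1, g2, g3, fun u => ?_⟩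
      rw [g4 u, exc_upd f a c 1 u, hf0]
      by_cases huc : u = c <;> by_cases hua : u = a
      · exact absurd (hua.symm.trans huc) hac
      all_goals simp [huc, hua, hac, Ne.symm hac] <;> ring
    · -- cancel reverse flow on (c, a)
      have hca1 : f c a = 1 := Nat.le_antisymm (h1 c a) (Nat.one_le_iff_ne_zero.mpr hca)
      set f₁ := upd f c a 0 with hf₁
      have hle : ∀ u v, f₁ u v ≤ f u v := by
        intro u v
        by_cases h : u = c ∧ v = a
        · obtain ⟨rfl, rfl⟩ := h; rw [hf₁, upd_same]; exact Nat.zero_le _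
        · rw [hf₁, upd_ne f _ _ _ h]
      have h1' : ∀ u v, f₁ u v ≤ 1 := fun u v => le_trans (hle u v) (h1 u v)
      have h2' : ∀ u v, f₁ u v ≠ 0 → G.Adj u v := by
        intro u v hne
        by_cases h : u = c ∧ v = a
        · obtain ⟨rfl, rfl⟩ := h; rw [hf₁, upd_same] at hne; exact absurd rfl hne
        · rw [hf₁, upd_ne f _ _ _ h] at hne; exact h2 u v hne
      have h3' := noc_mono hle h3
      have hchain' : List.Chain (fun u v => G.Adj u v ∧ f₁ u v = 0) c l := by
        refine chain_imp_mem l c hchain ?_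
        intro x y hx hy ⟨hxy, hxy0⟩
        refine ⟨hxy, ?_⟩
        rw [hf₁, upd_ne f _ _ _ (by rintro ⟨-, rfl⟩; exact hanotin hy)]
        exact hxy0
      obtain ⟨f', g1, g2, g3, g4⟩ := ih c f₁ h1' h2' h3' hchain' hndcl b hb'
      refine ⟨f', g1, g2, g3, fun u => ?_⟩
      rw [g4 u, exc_upd f c a 0 u, hca1]
      by_cases huc : u = c <;> by_cases hua : u = a
      · exact absurd (hua.symm.trans huc) hac
      all_goals simp [huc, hua, hac, Ne.symm hac] <;> ring
  




/-- Removing a flow-path from a flow, producing the corresponding walk. -/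
lemma rem_chain :
    ∀ (l : List V) (a : V) (f : V → V → ℕ),
      (∀ u v, f u v ≤ 1) → (∀ u v, f u v ≠ 0 → G.Adj u v) →
      List.Chain (fun u v => f u v = 1) a l → (a :: l).Nodup →
      ∀ b, (a :: l).getLast (List.cons_ne_nil _ _) = b →
      ∃ (W : G.Walk a b) (f' : V → V → ℕ),
        W.support = a :: l ∧ (∀ u v, f' u v ≤ f u v) ∧
        (∀ e ∈ W.edges, ∃ x y, e = s(x, y) ∧ f x y = 1 ∧ f' x y = 0) ∧
        (∀ u, exc f' u = exc f u + (if u = a then 1 else 0) - (if u = b then 1 else 0)) := by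
  intro l
  induction l with
  | nil =>
    intro a f h1 h2 _ _ b hb
    simp only [List.getLast_singleton'] at hb
    subst hb
    exact ⟨Walk.nil, f, by simp, fun u v => le_refl _, by simp, fun u => by ring⟩
  | cons c l ih =>
    intro a f h1 h2 hc hnd b hb
    unfold List.Chain at hc
    rw [List.chain_cons] at hc
    obtain ⟨hfac, hchain⟩ := hc
    have hadj : G.Adj a c := h2 a c (by rw [hfac]; exact one_ne_zero)
    have hac : a ≠ c := G.ne_of_adj hadj
    have hanotin : a ∉ c :: l := (List.nodup_cons.mp hnd).1
    have hndcl : (c :: l).Nodup := (List.nodup_cons.mp hnd).2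
    have hb' : (c :: l).getLast (List.cons_ne_nil _ _) = b := by
      rw [← hb, List.getLast_cons_cons]
    set f₁ := upd f a c 0 with hf₁
    have hle : ∀ u v, f₁ u v ≤ f u v := by
      intro u v
      by_cases h : u = a ∧ v = c
      · obtain ⟨rfl, rfl⟩ := h; rw [hf₁, upd_same]; exact Nat.zero_le _
      · rw [hf₁, upd_ne f _ _ _ h]
    have h1' : ∀ u v, f₁ u v ≤ 1 := fun u v => le_trans (hle u v) (h1 u v)
    have h2' : ∀ u v, f₁ u v ≠ 0 → G.Adj u v := by
      intro u v hne
      by_cases h : u = a ∧ v = c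
      · obtain ⟨rfl, rfl⟩ := h; rw [hf₁, upd_same] at hne; exact absurd rfl hne
      · rw [hf₁, upd_ne f _ _ _ h] at hne; exact h2 u v hne
    have hchain' : List.Chain (fun u v => f₁ u v = 1) c l := by
      refine chain_imp_mem l c hchain ?_
      intro x y hx _ hxy
      rw [hf₁, upd_ne f _ _ _ (by rintro ⟨rfl, -⟩; exact hanotin hx)]
      exact hxy
    obtain ⟨W', f', hsupp, g0, g1, g2⟩ := ih c f₁ h1' h2' hchain' hndcl b hb'
    refine ⟨Walk.cons hadj W', f', ?_, ?_, ?_, ?_⟩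
    · rw [Walk.support_cons, hsupp]
    · exact fun u v => le_trans (g0 u v) (hle u v)
    · intro e he
      rw [Walk.edges_cons, List.mem_cons] at he
      rcases he with rfl | he
      · refine ⟨a, c, rfl, hfac, ?_⟩
        have := g0 a c
        rw [hf₁, upd_same] at this
        exact Nat.le_zero.mp this
      · obtain ⟨x, y, hexy, hf₁xy, hf'xy⟩ := g1 e he
        refine ⟨x, y, hexy, ?_, hf'xy⟩
        have h1xy := hle x y
        rw [hf₁xy] at *
        have := h1 x y
        omega
    · intro u
      rw [g2 u, exc_upd f a c 0 u, hfac]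
      by_cases huc : u = c <;> by_cases hua : u = a
      · exact absurd (hua.symm.trans huc) hac
      all_goals simp [huc, hua, hac, Ne.symm hac] <;> ring







variable (s t : V)

/-- The flow predicate. -/
def IsFlo (f : V → V → ℕ) : Prop :=
  (∀ u v, f u v ≤ 1) ∧ (∀ u v, f u v ≠ 0 → G.Adj u v) ∧
  (∀ u v, f u v = 0 ∨ f v u = 0) ∧ (∀ u, u ≠ s → u ≠ t → exc f u = 0)

lemma sum_exc_eq {f : V → V → ℕ} (hf : IsFlo G s t f) {S : Finset V}
    (hs : s ∈ S) (ht : t ∉ S) : ∑ u ∈ S, exc f u = exc f s :=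
  Finset.sum_eq_single_of_mem s hs
    (fun u hu hne => hf.2.2.2 u hne (fun h => ht (h ▸ hu)))

lemma nodup_reach {R : V → V → Prop} (h : Relation.ReflTransGen R s t) :
    ∃ l', List.Chain R s l' ∧ (s :: l').Nodup ∧
      (s :: l').getLast (List.cons_ne_nil _ _) = t := by
  obtain ⟨l, hl, hlast⟩ := List.exists_isChain_cons_of_relationReflTransGen h
  obtain ⟨l', h1, h2, h3, _⟩ := exists_nodup_chain l.length l s t le_rfl hl hlast
  exact ⟨l', h1, h2, h3⟩

lemma aug_or_cut {f : V → V → ℕ} (hf : IsFlo G s t f) (hst : s ≠ t) {k : ℕ}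
    (hcut : ∀ S : Finset V, s ∈ S → t ∉ S →
      (k : ℤ) ≤ ∑ u ∈ S, ∑ v ∈ Sᶜ, (if G.Adj u v then (1:ℤ) else 0))
    (hlt : -(exc f s) < (k : ℤ)) :
    Relation.ReflTransGen (fun u v => G.Adj u v ∧ f u v = 0) s t := by
  by_contra hreach
  classical
  set R := fun u v => G.Adj u v ∧ f u v = 0 with hR
  set S : Finset V := Finset.univ.filter (fun u => Relation.ReflTransGen R s u) with hS
  have hsS : s ∈ S := by simp only [hS, Finset.mem_filter, Finset.mem_univ, true_and]; exact Relation.ReflTransGen.refl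
  have htS : t ∉ S := by simp only [hS, Finset.mem_filter, Finset.mem_univ, true_and]; exact hreach
  have hclosed : ∀ u ∈ S, ∀ v, v ∉ S → ¬ R u v := by
    intro u hu v hv hR'
    apply hv
    simp only [hS, Finset.mem_filter, Finset.mem_univ, true_and] at hu ⊢
    exact hu.tail hR'
  have hterm : ∀ u ∈ S, ∀ v ∈ Sᶜ, ((f v u : ℤ) - f u v)
      = -(if G.Adj u v then (1:ℤ) else 0) := by
    intro u hu v hv
    rw [Finset.mem_compl] at hv
    have hnR := hclosed u hu v hv
    have hfuv : (f u v : ℤ) = if G.Adj u v then (1:ℤ) else 0 := by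
      by_cases hadj : G.Adj u v
      · rw [if_pos hadj]
        have : f u v ≠ 0 := by
          intro h0
          exact hnR ⟨hadj, h0⟩
        have := hf.1 u v
        omega
      · rw [if_neg hadj]
        have : f u v = 0 := by
          by_contra h0
          exact hadj (hf.2.1 u v h0)
        omega
    have hfvu : f v u = 0 := by
      by_contra h0
      have hadj : G.Adj u v := (hf.2.1 v u h0).symm
      rcases hf.2.2.1 u v with h | h
      · exact hnR ⟨hadj, h⟩
      · exact h0 h
    rw [hfvu, hfuv]
    simp
  have key : exc f s = -∑ u ∈ S, ∑ v ∈ Sᶜ, (if G.Adj u v then (1:ℤ) else 0) := by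
    rw [← sum_exc_eq G s t hf hsS htS, exc_sum]
    rw [← Finset.sum_neg_distrib]
    refine Finset.sum_congr rfl (fun u hu => ?_)
    rw [← Finset.sum_neg_distrib]
    exact Finset.sum_congr rfl (fun v hv => hterm u hu v hv)
  have := hcut S hsS htS
  omega

lemma flow_reach_t {f : V → V → ℕ} (hf : IsFlo G s t f)
    (hpos : 0 < -(exc f s)) :
    Relation.ReflTransGen (fun u v => f u v = 1) s t := by
  by_contra hreach
  classical
  set R := fun u v : V => f u v = 1 with hR
  set S : Finset V := Finset.univ.filter (fun u => Relation.ReflTransGen R s u) with hS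
  have hsS : s ∈ S := by simp only [hS, Finset.mem_filter, Finset.mem_univ, true_and]; exact Relation.ReflTransGen.refl
  have htS : t ∉ S := by simp only [hS, Finset.mem_filter, Finset.mem_univ, true_and]; exact hreach
  have hclosed : ∀ u ∈ S, ∀ v, v ∉ S → f u v = 0 := by
    intro u hu v hv
    by_contra h0
    have : f u v = 1 := by have := hf.1 u v; omega
    apply hv
    simp only [hS, Finset.mem_filter, Finset.mem_univ, true_and] at hu ⊢
    exact hu.tail this
  have key : 0 ≤ exc f s := by
    rw [← sum_exc_eq G s t hf hsS htS, exc_sum]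
    refine Finset.sum_nonneg (fun u hu => Finset.sum_nonneg (fun v hv => ?_))
    rw [Finset.mem_compl] at hv
    rw [hclosed u hu v hv]
    simp
  omega

lemma exists_flow (hst : s ≠ t) {k : ℕ}
    (hcut : ∀ S : Finset V, s ∈ S → t ∉ S →
      (k : ℤ) ≤ ∑ u ∈ S, ∑ v ∈ Sᶜ, (if G.Adj u v then (1:ℤ) else 0)) :
    ∀ j : ℕ, ∃ f, IsFlo G s t f ∧ (min j k : ℤ) ≤ -(exc f s) := by
  intro j
  induction j with
  | zero =>
    refine ⟨fun _ _ => 0, ⟨fun u v => by simp, fun u v h => absurd rfl h,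
      fun u v => Or.inl rfl, fun u _ _ => by simp [exc]⟩, ?_⟩
    simp [exc]
  | succ j ih =>
    obtain ⟨f, hf, hv⟩ := ih
    by_cases hk : (k : ℤ) ≤ -(exc f s)
    · refine ⟨f, hf, le_trans ?_ hk⟩
      exact_mod_cast Nat.cast_le.mpr (min_le_right (j+1) k)
    · have hreach := aug_or_cut G s t hf hst hcut (by omega)
      obtain ⟨l', hchain, hnd, hlast⟩ := nodup_reach s t hreach
      obtain ⟨f', g1, g2, g3, g4⟩ :=
        aug_chain G l' s f hf.1 hf.2.1 hf.2.2.1 hchain hnd t hlast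
      refine ⟨f', ⟨g1, g2, g3, fun u hus hut => ?_⟩, ?_⟩
      · rw [g4 u, hf.2.2.2 u hus hut, if_neg hut, if_neg hus]; ring
      · have hs' : exc f' s = exc f s - 1 := by
          rw [g4 s, if_neg (Ne.symm (by exact fun h => hst h.symm)), if_pos rfl]
          ring
        have hmin : (min (j+1) k : ℕ) ≤ min j k + 1 := by omega
        have : (min j k : ℤ) ≤ -(exc f s) := hv
        have := (Nat.cast_le (α := ℤ)).mpr hmin
        push_cast at this ⊢
        omega

lemma decomp (hst : s ≠ t) :
    ∀ (m : ℕ) (f : V → V → ℕ), IsFlo G s t f → (m : ℤ) ≤ -(exc f s) →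
    ∃ P : Fin m → G.Walk s t, (∀ i, (P i).IsPath) ∧
      (∀ i e, e ∈ (P i).edges → ∃ x y, e = s(x, y) ∧ f x y = 1) ∧
      (∀ i j, i ≠ j → ∀ e, e ∈ (P i).edges → e ∉ (P j).edges) := by
  intro m
  induction m with
  | zero =>
    intro f _ _
    exact ⟨Fin.elim0, fun i => i.elim0, fun i => i.elim0, fun i => i.elim0⟩
  | succ m ih =>
    intro f hf hv
    have hpos : 0 < -(exc f s) := by
      have : (0:ℤ) < (m:ℤ) + 1 := by positivity
      push_cast at hv
      omega
    have hreach := flow_reach_t G s t hf hpos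
    obtain ⟨l', hchain, hnd, hlast⟩ := nodup_reach s t hreach
    obtain ⟨W, f', hsupp, hle, hedges, hexc⟩ :=
      rem_chain G l' s f hf.1 hf.2.1 hchain hnd t hlast
    have hWpath : W.IsPath := by rw [Walk.isPath_def, hsupp]; exact hnd
    have hf' : IsFlo G s t f' := by
      refine ⟨fun u v => le_trans (hle u v) (hf.1 u v),
        fun u v h0 => hf.2.1 u v (fun h => h0 (Nat.le_zero.mp (h ▸ hle u v))),
        noc_mono hle hf.2.2.1, fun u hus hut => ?_⟩
      rw [hexc u, hf.2.2.2 u hus hut, if_neg hus, if_neg hut]; ring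
    have hv' : (m : ℤ) ≤ -(exc f' s) := by
      have : exc f' s = exc f s + 1 := by
        rw [hexc s, if_pos rfl, if_neg hst]; ring
      push_cast at hv
      omega
    obtain ⟨P', hP'path, hP'flow, hP'disj⟩ := ih f' hf' hv'
    refine ⟨Fin.cons W P', ?_, ?_, ?_⟩
    · intro i
      rcases Fin.eq_zero_or_eq_succ i with rfl | ⟨i', rfl⟩
      · simpa using hWpath
      · simpa using hP'path i'
    · intro i e he
      rcases Fin.eq_zero_or_eq_succ i with rfl | ⟨i', rfl⟩
      · simp only [Fin.cons_zero] at he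
        obtain ⟨x, y, hexy, hfxy, _⟩ := hedges e he
        exact ⟨x, y, hexy, hfxy⟩
      · simp only [Fin.cons_succ] at he
        obtain ⟨x, y, hexy, hfxy⟩ := hP'flow i' e he
        refine ⟨x, y, hexy, ?_⟩
        have := hle x y
        have := hf.1 x y
        omega
    · have hdisjW : ∀ e ∈ W.edges, ∀ i', e ∉ (P' i').edges := by
        intro e he i' hmem
        obtain ⟨x, y, hexy, hfxy, hf'xy⟩ := hedges e he
        have hf'yx : f' y x = 0 := by
          have hyx : f y x = 0 := by
            rcases hf.2.2.1 x y with h | h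
            · omega
            · exact h
          have := hle y x
          omega
        obtain ⟨x', y', hexy', hf'xy'⟩ := hP'flow i' e hmem
        rw [hexy] at hexy'
        rcases Sym2.eq_iff.mp hexy' with ⟨rfl, rfl⟩ | ⟨rfl, rfl⟩
        · omega
        · omega
      intro i j hij e hei hej
      rcases Fin.eq_zero_or_eq_succ i with rfl | ⟨i', rfl⟩ <;>
        rcases Fin.eq_zero_or_eq_succ j with rfl | ⟨j', rfl⟩
      · exact absurd rfl hij
      · simp only [Fin.cons_zero] at hei
        simp only [Fin.cons_succ] at hej
        exact hdisjW e hei j' hej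
      · simp only [Fin.cons_succ] at hei
        simp only [Fin.cons_zero] at hej
        exact hdisjW e hej i' hei
      · simp only [Fin.cons_succ] at hei hej
        exact hP'disj i' j' (by simpa using hij) e hei hej

/-- Edge Menger: a cut bound gives `k` edge-disjoint paths. -/
lemma menger (hst : s ≠ t) (k : ℕ)
    (hcut : ∀ S : Finset V, s ∈ S → t ∉ S →
      (k : ℤ) ≤ ∑ u ∈ S, ∑ v ∈ Sᶜ, (if G.Adj u v then (1:ℤ) else 0)) :
    ∃ P : Fin k → G.Walk s t, (∀ i, (P i).IsPath) ∧
      ∀ i j, i ≠ j → ∀ e, e ∈ (P i).edges → e ∉ (P j).edges := by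
  obtain ⟨f, hf, hv⟩ := exists_flow G s t hst hcut k
  rw [min_self] at hv
  obtain ⟨P, h1, _, h3⟩ := decomp G s t hst k f hf hv
  exact ⟨P, h1, h3⟩





lemma cut_card (S : Finset V) :
    {e ∈ G.edgeSet | ∃ x y, e = s(x, y) ∧ x ∈ (S : Set V) ∧ y ∉ (S : Set V)}.ncard
      = ∑ u ∈ S, ∑ v ∈ Sᶜ, (if G.Adj u v then (1 : ℕ) else 0) := by
  classical
  set T : Finset (Sym2 V) :=
    ((S ×ˢ Sᶜ).filter (fun p => G.Adj p.1 p.2)).image (fun p => s(p.1, p.2)) with hT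
  have hset : {e ∈ G.edgeSet | ∃ x y, e = s(x, y) ∧ x ∈ (S : Set V) ∧ y ∉ (S : Set V)}
      = (T : Set (Sym2 V)) := by
    ext e
    simp only [hT, Finset.coe_image, Set.mem_image, Finset.mem_coe, Finset.mem_filter,
      Finset.mem_product, Finset.mem_compl, Set.mem_setOf_eq, Finset.coe_sort_coe]
    constructor
    · rintro ⟨hE, x, y, rfl, hx, hy⟩
      exact ⟨(x, y), ⟨⟨by simpa using hx, by simpa using hy⟩, G.mem_edgeSet.mp hE⟩, rfl⟩
    · rintro ⟨⟨x, y⟩, ⟨⟨hx, hy⟩, hadj⟩, rfl⟩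
      exact ⟨G.mem_edgeSet.mpr hadj, x, y, rfl, by simpa using hx, by simpa using hy⟩
  rw [hset, Set.ncard_coe_finset, hT]
  rw [Finset.card_image_of_injOn]
  · rw [Finset.card_filter, Finset.sum_product]
  · rintro ⟨x, y⟩ hp ⟨x', y'⟩ hq h
    simp only [Finset.mem_coe, Finset.mem_filter, Finset.mem_product, Finset.mem_compl] at hp hq
    rcases Sym2.eq_iff.mp h with ⟨rfl, rfl⟩ | ⟨rfl, rfl⟩
    · rfl
    · exact absurd hq.1.1 hp.1.2

/-- bound on family size -/
lemma family_bound (v w : V) (hvw : v ≠ w) (n : ℕ)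
    (P : Fin n → G.Walk v w) (hpath : ∀ i, (P i).IsPath)
    (hdisj : ∀ i j, i ≠ j → ∀ e, e ∈ (P i).edges → e ∉ (P j).edges) :
    n ≤ Fintype.card (Sym2 V) := by
  classical
  have hne : ∀ i, (P i).edges ≠ [] := by
    intro i h
    cases hP : P i with
    | nil => exact hvw rfl
    | cons h' q => rw [hP, SimpleGraph.Walk.edges_cons] at h; exact List.cons_ne_nil _ _ h
  have hinj : Function.Injective (fun i => (P i).edges.head (hne i)) := by
    intro i j h
    by_contra hij
    simp only at h
    exact hdisj i j hij _ (List.head_mem (hne i)) (h ▸ List.head_mem (hne j))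
  simpa using Fintype.card_le_of_injective _ hinj


end WithGraph

end Flow




lemma card_fiber_le (n : ℕ) (a b : Fin (n + 1)) :
    (Finset.univ.filter fun σ : Equiv.Perm (Fin (n + 1)) => σ b = a).card ≤ Nat.factorial n := by
  classical
  rw [← Fintype.card_subtype]
  have hinj : Function.Injective
      (fun σ : {σ : Equiv.Perm (Fin (n + 1)) // σ b = a} =>
        ((σ.1.subtypeEquiv (p := fun x => x ≠ b) (q := fun y => y ≠ a)
          (fun x => by
            constructor
            · intro hx h
              exact hx (σ.1.injective (h.trans σ.2.symm))
            · intro hx h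
              exact hx (h ▸ σ.2))).trans
          ((Equiv.swap a b).subtypeEquiv (p := fun y => y ≠ a) (q := fun x => x ≠ b)
          (fun y => not_congr ⟨fun h => h ▸ Equiv.swap_apply_left a b,
            fun h => (Equiv.swap a b).injective
              (h.trans (Equiv.swap_apply_left a b).symm)⟩))) :
              {σ : Equiv.Perm (Fin (n+1)) // σ b = a}
            → Equiv.Perm {x : Fin (n+1) // x ≠ b}) := by
    intro σ τ h
    apply Subtype.ext
    apply Equiv.ext
    intro x
    by_cases hx : x = b
    · rw [hx, σ.2, τ.2]
    · have h2 := congrArg (fun (e : Equiv.Perm {x : Fin (n+1) // x ≠ b}) =>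
        ((e ⟨x, hx⟩ : {x : Fin (n+1) // x ≠ b}).1)) h
      simp only [Equiv.trans_apply, Equiv.subtypeEquiv_apply] at h2
      exact (Equiv.swap a b).injective h2
  have hle := Fintype.card_le_of_injective _ hinj
  have hcard : Fintype.card {x : Fin (n+1) // x ≠ b} = n := by
    rw [Fintype.card_subtype_compl]
    simp [Fintype.card_subtype_eq]
  rw [Fintype.card_perm, hcard] at hle
  exact hle

/-- Dirac's cut bound for critical graphs. -/
lemma dirac_cut {V : Type} [Fintype V] (G : SimpleGraph V) (k : ℕ)
    (hcrit : IsCritical G) (hchi : G.chromaticNumber = ((k + 1 : ℕ) : ℕ∞))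
    (S : Set V) (v w : V) (hv : v ∈ S) (hw : w ∉ S) :
    k ≤ {e ∈ G.edgeSet | ∃ x y, e = s(x, y) ∧ x ∈ S ∧ y ∉ S}.ncard := by
  classical
  by_contra hlt
  push_neg at hlt
  rcases k with - | n
  · omega
  set F : Set (Sym2 V) := {e ∈ G.edgeSet | ∃ x y, e = s(x, y) ∧ x ∈ S ∧ y ∉ S} with hF
  have hFfin : F.Finite := Set.toFinite F
  set T : Finset (Sym2 V) := hFfin.toFinset with hT
  have hcardT : T.card ≤ n := by
    rw [hT, ← Set.ncard_eq_toFinset_card F hFfin]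
    omega
  -- colorings of both sides
  have colside : ∀ U : Set V, (∃ z, z ∉ U) → ∃ c : ((⊤ : G.Subgraph).induce U).coe.Coloring (Fin (n+1)), True := by
    intro U ⟨z, hz⟩
    have hne : (⊤ : G.Subgraph).induce U ≠ ⊤ := by
      intro h
      have := congrArg SimpleGraph.Subgraph.verts h
      rw [SimpleGraph.Subgraph.induce_verts, SimpleGraph.Subgraph.verts_top] at this
      exact hz (this ▸ Set.mem_univ z)
    have hlt' := hcrit _ hne
    rw [hchi] at hlt'
    have hle' : ((⊤ : G.Subgraph).induce U).coe.chromaticNumber ≤ ((n+1 : ℕ) : ℕ∞) := by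
      have : ((n + 1 + 1 : ℕ) : ℕ∞) = ((n+1 : ℕ) : ℕ∞) + 1 := by push_cast; ring
      rw [this] at hlt'
      exact (ENat.lt_add_one_iff (by exact_mod_cast ENat.coe_ne_top (n+1))).mp hlt'
    exact ⟨(SimpleGraph.chromaticNumber_le_iff_colorable.mp hle').some, trivial⟩
  obtain ⟨c₁, -⟩ := colside S ⟨w, hw⟩
  obtain ⟨c₂, -⟩ := colside Sᶜ ⟨v, by simpa using hv⟩
  -- endpoints of cut edges
  have hch : ∀ e, e ∈ T → ∃ x y, e = s(x, y) ∧ x ∈ S ∧ y ∉ S := by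
    intro e he
    rw [hT, Set.Finite.mem_toFinset] at he
    exact he.2
  haveI : Inhabited V := ⟨v⟩
  choose! X Y hXY hXS hYS using hch
  set A : Sym2 V → Fin (n+1) := fun e => if h : X e ∈ S then c₁ ⟨X e, h⟩ else 0 with hA
  set B : Sym2 V → Fin (n+1) := fun e => if h : Y e ∈ Sᶜ then c₂ ⟨Y e, h⟩ else 0 with hB
  set Bad : Finset (Equiv.Perm (Fin (n+1))) :=
    T.biUnion (fun e => Finset.univ.filter (fun σ => σ (B e) = A e)) with hBad
  have hBadcard : Bad.card < Fintype.card (Equiv.Perm (Fin (n+1))) := by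
    calc Bad.card ≤ ∑ e ∈ T, (Finset.univ.filter (fun σ : Equiv.Perm (Fin (n+1)) => σ (B e) = A e)).card :=
          Finset.card_biUnion_le
    _ ≤ ∑ _e ∈ T, Nat.factorial n := Finset.sum_le_sum (fun e _ => card_fiber_le n (A e) (B e))
    _ = T.card * Nat.factorial n := by rw [Finset.sum_const, smul_eq_mul]
    _ ≤ n * Nat.factorial n := Nat.mul_le_mul_right _ hcardT
    _ < (n + 1) * Nat.factorial n := by
        have := Nat.factorial_pos n
        nlinarith
    _ = Fintype.card (Equiv.Perm (Fin (n+1))) := by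
        rw [Fintype.card_perm, Fintype.card_fin, Nat.factorial_succ]
  obtain ⟨σ, hσ⟩ : ∃ σ, σ ∉ Bad := by
    by_contra hall
    push_neg at hall
    have : Bad = Finset.univ := Finset.eq_univ_iff_forall.mpr hall
    rw [this, Finset.card_univ] at hBadcard
    omega
  have hgood : ∀ e ∈ T, σ (B e) ≠ A e := by
    intro e he h
    exact hσ (Finset.mem_biUnion.mpr ⟨e, he, Finset.mem_filter.mpr ⟨Finset.mem_univ _, h⟩⟩)
  -- combined coloring
  set c : V → Fin (n+1) :=
    fun x => if h : x ∈ S then c₁ ⟨x, h⟩ else σ (c₂ ⟨x, by simpa using h⟩) with hc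
  have hvalid : ∀ {x y : V}, G.Adj x y → c x ≠ c y := by
    intro x y hadj
    have hxyne : x ≠ y := G.ne_of_adj hadj
    by_cases hx : x ∈ S <;> by_cases hy : y ∈ S
    · rw [hc]
      simp only [dif_pos hx, dif_pos hy]
      have : ((⊤ : G.Subgraph).induce S).coe.Adj ⟨x, hx⟩ ⟨y, hy⟩ := by
        simp [SimpleGraph.Subgraph.coe_adj, SimpleGraph.Subgraph.induce_adj, hx, hy, hadj]
      exact c₁.valid this
    · -- x ∈ S, y ∉ S : crossing edge
      have heT : s(x, y) ∈ T := by
        rw [hT, Set.Finite.mem_toFinset, hF]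
        exact ⟨G.mem_edgeSet.mpr hadj, x, y, rfl, hx, hy⟩
      have hxy := hXY _ heT
      have hXe : X s(x,y) = x ∧ Y s(x,y) = y := by
        rcases Sym2.eq_iff.mp hxy with ⟨h1, h2⟩ | ⟨h1, h2⟩
        · exact ⟨h1.symm, h2.symm⟩
        · exact absurd (show y ∈ S by rw [h2]; exact hXS _ heT) hy
      have hg := hgood _ heT
      rw [hc]
      simp only [dif_pos hx, dif_neg hy]
      intro hcontra
      apply hg
      rw [hA, hB]
      simp only [hXe.1, hXe.2, dif_pos hx, dif_pos (by simpa using hy : y ∈ Sᶜ)]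
      exact hcontra.symm
    · -- y ∈ S, x ∉ S
      have heT : s(y, x) ∈ T := by
        rw [hT, Set.Finite.mem_toFinset, hF]
        exact ⟨G.mem_edgeSet.mpr hadj.symm, y, x, rfl, hy, hx⟩
      have hxy := hXY _ heT
      have hXe : X s(y,x) = y ∧ Y s(y,x) = x := by
        rcases Sym2.eq_iff.mp hxy with ⟨h1, h2⟩ | ⟨h1, h2⟩
        · exact ⟨h1.symm, h2.symm⟩
        · exact absurd (show x ∈ S by rw [h2]; exact hXS _ heT) hx
      have hg := hgood _ heT
      rw [hc]
      simp only [dif_neg hx, dif_pos hy]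
      intro hcontra
      apply hg
      rw [hA, hB]
      simp only [hXe.1, hXe.2, dif_pos hy, dif_pos (by simpa using hx : x ∈ Sᶜ)]
      exact hcontra
    · rw [hc]
      simp only [dif_neg hx, dif_neg hy]
      intro hcontra
      have : ((⊤ : G.Subgraph).induce Sᶜ).coe.Adj ⟨x, by simpa using hx⟩ ⟨y, by simpa using hy⟩ := by
        simp [SimpleGraph.Subgraph.coe_adj, SimpleGraph.Subgraph.induce_adj, hx, hy, hadj]
      exact c₂.valid this (σ.injective hcontra)
  have hcol : G.Colorable (n+1) := ⟨SimpleGraph.Coloring.mk c hvalid⟩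
  have := hcol.chromaticNumber_le
  rw [hchi] at this
  have := (Nat.cast_le (α := ℕ∞)).mp this
  omega


end CritAux


/-- In a critical graph with chromatic number `k+1`, any two
distinct vertices are joined by `k` edge-disjoint paths; consequently the graph
is `k`-edge-connected. -/
theorem critical_localEdgeConn_ge {V : Type} [Fintype V] (G : SimpleGraph V) (k : ℕ)
    (hcrit : IsCritical G) (hchi : G.chromaticNumber = (↑(k + 1) : ℕ∞)) :
    (∀ v w : V, v ≠ w → k ≤ localEdgeConn G v w) ∧
    (∀ F : Set (Sym2 V), IsSepEdgeSet G F → k ≤ F.ncard) := by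
  classical
  letI : DecidableEq V := Classical.decEq V
  letI : DecidableRel G.Adj := Classical.decRel _
  have key : ∀ v w : V, v ≠ w → HasEdgeDisjointPaths G v w k := by
    intro v w hvw
    have hcut : ∀ S : Finset V, v ∈ S → w ∉ S →
        (k : ℤ) ≤ ∑ u ∈ S, ∑ x ∈ Sᶜ, (if G.Adj u x then (1:ℤ) else 0) := by
      intro S hvS hwS
      have hd := CritAux.dirac_cut G k hcrit hchi (↑S) v w (by simpa) (by simpa)
      rw [CritAux.cut_card G S] at hd
      have hcast : ((∑ u ∈ S, ∑ x ∈ Sᶜ, (if G.Adj u x then (1:ℕ) else 0) : ℕ) : ℤ)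
          = ∑ u ∈ S, ∑ x ∈ Sᶜ, (if G.Adj u x then (1:ℤ) else 0) := by
        push_cast
        rfl
      rw [← hcast]
      exact_mod_cast hd
    obtain ⟨P, h1, h3⟩ := CritAux.menger G v w hvw k hcut
    exact ⟨P, h1, h3⟩
  constructor
  · intro v w hvw
    apply le_csSup
    · refine ⟨Fintype.card (Sym2 V), ?_⟩
      rintro n ⟨P, h1, h2⟩
      exact CritAux.family_bound G v w hvw n P h1 h2
    · exact key v w hvw
  · intro F hsep
    unfold IsSepEdgeSet numComponents at hsep
    set φ : (G.deleteEdges F).ConnectedComponent → G.ConnectedComponent :=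
      SimpleGraph.ConnectedComponent.map
        (SimpleGraph.Hom.ofLE (G.deleteEdges_le F)) with hφ
    haveI : Finite (G.deleteEdges F).ConnectedComponent :=
      Finite.of_surjective ((G.deleteEdges F).connectedComponentMk)
        (fun c => c.exists_rep)
    haveI : Finite G.ConnectedComponent :=
      Finite.of_surjective (G.connectedComponentMk) (fun c => c.exists_rep)
    have hφmk : ∀ x : V, φ ((G.deleteEdges F).connectedComponentMk x)
        = G.connectedComponentMk x := fun x => rfl
    have hnotinj : ¬ Function.Injective φ := by
      intro hinj
      have hsurj : Function.Surjective φ := by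
        intro c
        obtain ⟨x, rfl⟩ := c.exists_rep
        exact ⟨(G.deleteEdges F).connectedComponentMk x, hφmk x⟩
      have := Nat.card_eq_of_bijective φ ⟨hinj, hsurj⟩
      omega
    rw [Function.not_injective_iff] at hnotinj
    obtain ⟨c1, c2, heq, hne⟩ := hnotinj
    obtain ⟨v, rfl⟩ := c1.exists_rep
    obtain ⟨w, rfl⟩ := c2.exists_rep
    have hdel : ¬ (G.deleteEdges F).Reachable v w := by
      intro h
      exact hne (SimpleGraph.ConnectedComponent.sound h)
    have hvw : v ≠ w := by
      rintro rfl
      exact hne rfl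
    obtain ⟨P, hp, hd⟩ := key v w hvw
    have hFe : ∀ i : Fin k, ∃ e, e ∈ (P i).edges ∧ e ∈ F := by
      intro i
      by_contra h
      push_neg at h
      apply hdel
      refine ⟨(P i).transfer (G.deleteEdges F) ?_⟩
      intro e he
      rw [SimpleGraph.edgeSet_deleteEdges]
      exact ⟨(P i).edges_subset_edgeSet he, h e he⟩
    choose eF heP heF using hFe
    have hcard : Nat.card (Fin k) ≤ Nat.card F := by
      refine Nat.card_le_card_of_injective (fun i => (⟨eF i, heF i⟩ : F)) ?_
      intro i j h
      by_contra hij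
      have hval : eF i = eF j := congrArg Subtype.val h
      exact hd i j hij _ (heP i) (hval ▸ heP j)
    have h1 : Nat.card (Fin k) = k := by simp
    have h2 : Nat.card F = F.ncard := Nat.card_coe_set_eq F
    rw [h1, h2] at hcard
    exact hcard
end

section
/- Let G be a critical graph with chromatic number k+1 for an integer k ≥ 1. Then every block of the low vertex subgraph G_L is a complete graph or an odd cycle. -/
open SimpleGraph

section GallaiAuxSection
set_option linter.unusedSectionVars false
set_option linter.unusedVariables false
set_option maxHeartbeats 1600000

namespace GallaiAux
open Finset
variable {V : Type} [DecidableEq V] (G : SimpleGraph V) [DecidableRel G.Adj]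

/-- Reachability within a finset `A`. -/
def Wk (A : Finset V) : V → V → Prop :=
  Relation.ReflTransGen (fun x y => G.Adj x y ∧ x ∈ A ∧ y ∈ A)

theorem Wk.symm {A : Finset V} {x y : V} (h : Wk G A x y) : Wk G A y x := by
  refine @Std.Symm.symm _ _ (@Relation.ReflTransGen.stdSymm _ _ ⟨?_⟩) _ _ h
  intro a b ⟨h1, h2, h3⟩
  exact ⟨h1.symm, h3, h2⟩

theorem Wk.trans {A : Finset V} {x y z : V} (h : Wk G A x y) (h' : Wk G A y z) :
    Wk G A x z := Relation.ReflTransGen.trans h h'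

theorem Wk.mono {A B : Finset V} (hAB : A ⊆ B) {x y : V} (h : Wk G A x y) :
    Wk G B x y := by
  refine Relation.ReflTransGen.mono ?_ _ _ h
  intro a b ⟨h1, h2, h3⟩
  exact ⟨h1, hAB h2, hAB h3⟩

theorem Wk.mem_left {A : Finset V} {x y : V} (h : Wk G A x y) (hx : x ∈ A) : y ∈ A := by
  induction h with
  | refl => exact hx
  | tail _ h ih => exact h.2.2

/-- `ConnA G A`: `A` induces a connected (possibly empty) graph. -/
def ConnA (A : Finset V) : Prop := ∀ x ∈ A, ∀ y ∈ A, Wk G A x y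

open Classical in
/-- The component of `z` within `A`. -/
noncomputable def Comp (A : Finset V) (z : V) : Finset V :=
  A.filter (fun v => Wk G A z v)

theorem mem_Comp {A : Finset V} {z v : V} :
    v ∈ Comp G A z ↔ v ∈ A ∧ Wk G A z v := by
  classical
  simp [Comp]

theorem Comp_subset {A : Finset V} {z : V} : Comp G A z ⊆ A := by
  intro v hv; exact (mem_Comp G |>.1 hv).1

theorem mem_Comp_self {A : Finset V} {z : V} (hz : z ∈ A) : z ∈ Comp G A z :=
  (mem_Comp G).2 ⟨hz, Relation.ReflTransGen.refl⟩

/-- Components are closed under adjacency within `A`. -/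
theorem Comp_closed {A : Finset V} {z u v : V} (hu : u ∈ Comp G A z)
    (hv : v ∈ A) (hadj : G.Adj u v) : v ∈ Comp G A z := by
  obtain ⟨huA, hw⟩ := (mem_Comp G).1 hu
  exact (mem_Comp G).2 ⟨hv, Relation.ReflTransGen.tail hw ⟨hadj, huA, hv⟩⟩

theorem Comp_eq_of_mem {A : Finset V} {z u : V} (hu : u ∈ Comp G A z) :
    Comp G A u = Comp G A z := by
  obtain ⟨huA, hw⟩ := (mem_Comp G).1 hu
  ext v
  simp only [mem_Comp]
  constructor
  · rintro ⟨h1, h2⟩; exact ⟨h1, Wk.trans G hw h2⟩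
  · rintro ⟨h1, h2⟩; exact ⟨h1, Wk.trans G (Wk.symm G hw) h2⟩

open Classical in
/-- BFS layers from `r` within `A`. -/
noncomputable def grow (A : Finset V) (r : V) : ℕ → Finset V
  | 0 => {r}
  | n + 1 => grow A r n ∪ A.filter (fun v => ∃ w ∈ grow A r n, G.Adj v w)

theorem grow_subset {A : Finset V} {r : V} (hr : r ∈ A) (n : ℕ) : grow G A r n ⊆ A := by
  classical
  induction n with
  | zero => intro v hv; simp [grow] at hv; subst hv; exact hr
  | succ n ih =>
    intro v hv
    rw [grow] at hv
    rcases Finset.mem_union.1 hv with h | h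
    · exact ih h
    · exact (Finset.mem_filter.1 h).1

theorem grow_mono {A : Finset V} {r : V} {m n : ℕ} (h : m ≤ n) :
    grow G A r m ⊆ grow G A r n := by
  classical
  induction n with
  | zero => cases Nat.le_zero.1 h; exact Finset.Subset.refl _
  | succ n ih =>
    rcases Nat.lt_or_ge m (n+1) with h' | h'
    · refine subset_trans (ih (Nat.lt_succ_iff.1 h')) ?_
      rw [grow]; exact Finset.subset_union_left
    · have : m = n + 1 := le_antisymm h h'
      subst this; exact Finset.Subset.refl _

theorem mem_grow_of_wk {A : Finset V} {r v : V} (h : Wk G A r v) :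
    ∃ n, v ∈ grow G A r n := by
  classical
  induction h with
  | refl => exact ⟨0, by simp [grow]⟩
  | tail _ hst ih =>
    obtain ⟨n, hn⟩ := ih
    rename_i b c _
    refine ⟨n + 1, ?_⟩
    rw [grow]
    refine Finset.mem_union.2 (Or.inr (Finset.mem_filter.2 ⟨hst.2.2, ⟨b, hn, hst.1.symm⟩⟩))

open Classical in
noncomputable def fdist (A : Finset V) (r : V) (v : V) : ℕ :=
  if h : ∃ n, v ∈ grow G A r n then Nat.find h else 0

/-- the toward-root property of the BFS distance. -/
theorem fdist_toward {A : Finset V} {r : V} (hr : r ∈ A) {v : V} (hv : v ∈ A)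
    (hvr : v ≠ r) (hw : Wk G A r v) :
    ∃ w ∈ A, G.Adj v w ∧ fdist G A r w < fdist G A r v := by
  classical
  have h : ∃ n, v ∈ grow G A r n := mem_grow_of_wk G hw
  have hv0 : v ∈ grow G A r (Nat.find h) := Nat.find_spec h
  have hfv : fdist G A r v = Nat.find h := by rw [fdist, dif_pos h]
  rcases Nat.eq_zero_or_pos (Nat.find h) with h0 | hpos
  · rw [h0] at hv0; simp [grow] at hv0; exact absurd hv0 hvr
  · obtain ⟨m, hm⟩ := Nat.exists_eq_succ_of_ne_zero (Nat.pos_iff_ne_zero.1 hpos)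
    rw [hm] at hv0
    rw [grow] at hv0
    rcases Finset.mem_union.1 hv0 with h' | h'
    · exact absurd h' (Nat.find_min h (by omega))
    · obtain ⟨_, w, hwg, hadj⟩ := Finset.mem_filter.1 h'
      have hwex : ∃ n, w ∈ grow G A r n := ⟨m, hwg⟩
      refine ⟨w, grow_subset G hr m hwg, hadj, ?_⟩
      have : fdist G A r w ≤ m := by
        rw [fdist, dif_pos hwex]; exact Nat.find_le hwg
      omega

/-- number of neighbors of `v` within `S` -/
def degS (S : Finset V) (v : V) : ℕ := (S.filter (fun w => G.Adj v w)).card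

/-- Greedy list coloring along an order given by a "toward-root" function `f`. -/
theorem greedy (f : V → ℕ) :
    ∀ (S : Finset V) (r : V) (L : V → Finset ℕ), r ∈ S →
    (∀ v ∈ S, v ≠ r → ∃ w ∈ S, G.Adj v w ∧ f w < f v) →
    (∀ v ∈ S, v ≠ r → degS G S v ≤ (L v).card) →
    (degS G S r < (L r).card) →
    ∃ c : V → ℕ, (∀ v ∈ S, c v ∈ L v) ∧
      ∀ v ∈ S, ∀ w ∈ S, G.Adj v w → c v ≠ c w := by
  intro S
  induction S using Finset.strongInduction with
  | _ S IH =>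
  intro r L hr htow hsz hszr
  by_cases hSr : S.erase r = ∅
  · -- S = {r}
    have hS : S = {r} := by
      apply Finset.Subset.antisymm
      · intro v hv
        rcases eq_or_ne v r with h | h
        · simp [h]
        · exact absurd (Finset.mem_erase.2 ⟨h, hv⟩) (by simp [hSr])
      · simpa using hr
    have hL : (L r).Nonempty := Finset.card_pos.1 (Nat.lt_of_le_of_lt (Nat.zero_le _) hszr)
    obtain ⟨c0, hc0⟩ := hL
    refine ⟨fun _ => c0, ?_, ?_⟩
    · intro v hv; rw [hS] at hv; simp at hv; subst hv; exact hc0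
    · intro v hv w hw hadj
      rw [hS] at hv hw; simp at hv hw; subst hv; subst hw
      exact absurd hadj (G.irrefl)
  · obtain ⟨u, hu, humax⟩ := Finset.exists_max_image (S.erase r) f
      (Finset.nonempty_iff_ne_empty.2 hSr)
    have huS : u ∈ S := Finset.mem_of_mem_erase hu
    have hur : u ≠ r := Finset.ne_of_mem_erase hu
    -- L u is nonempty
    have hLu : (L u).Nonempty := by
      obtain ⟨w, hwS, hadj, _⟩ := htow u huS hur
      refine Finset.card_pos.1 (Nat.lt_of_lt_of_le ?_ (hsz u huS hur))
      refine Finset.card_pos.2 ⟨w, Finset.mem_filter.2 ⟨hwS, hadj⟩⟩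
    obtain ⟨α, hα⟩ := hLu
    set S' := S.erase u with hS'
    set L' := fun v => if G.Adj u v then (L v).erase α else L v with hL'
    have hfilter : ∀ v, S'.filter (fun w => G.Adj v w)
        = (S.filter (fun w => G.Adj v w)).erase u := by
      intro v; rw [hS', Finset.filter_erase]
    have hsub : ∀ v, (L' v) ⊆ L v := by
      intro v; rw [hL']
      by_cases h : G.Adj u v
      · simp only [if_pos h]; exact Finset.erase_subset _ _
      · simp only [if_neg h]; exact Finset.Subset.refl _
    have hdeg' : ∀ v ∈ S', v ≠ r → degS G S' v ≤ (L' v).card := by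
      intro v hv hvr
      have hvS : v ∈ S := Finset.mem_of_mem_erase hv
      rw [degS, hfilter v, hL']
      by_cases h : G.Adj u v
      · simp only [if_pos h]
        have hu_mem : u ∈ S.filter (fun w => G.Adj v w) :=
          Finset.mem_filter.2 ⟨huS, h.symm⟩
        rw [Finset.card_erase_of_mem hu_mem]
        have h1 : degS G S v ≤ (L v).card := hsz v hvS hvr
        have h2 : (L v).card - 1 ≤ ((L v).erase α).card := Finset.pred_card_le_card_erase
        rw [degS] at h1
        omega
      · simp only [if_neg h]
        have hu_not : u ∉ S.filter (fun w => G.Adj v w) := by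
          simp only [Finset.mem_filter, not_and]
          intro _ hadj; exact h hadj.symm
        rw [Finset.erase_eq_of_notMem hu_not]
        exact hsz v hvS hvr
    have hdegr' : degS G S' r < (L' r).card := by
      rw [degS, hfilter r, hL']
      by_cases h : G.Adj u r
      · simp only [if_pos h]
        have hu_mem : u ∈ S.filter (fun w => G.Adj r w) :=
          Finset.mem_filter.2 ⟨huS, h.symm⟩
        rw [Finset.card_erase_of_mem hu_mem]
        have h2 : (L r).card - 1 ≤ ((L r).erase α).card := Finset.pred_card_le_card_erase
        have h1 := hszr
        rw [degS] at h1
        have hc : 0 < (S.filter (fun w => G.Adj r w)).card := Finset.card_pos.2 ⟨u, hu_mem⟩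
        omega
      · simp only [if_neg h]
        have hu_not : u ∉ S.filter (fun w => G.Adj r w) := by
          simp only [Finset.mem_filter, not_and]
          intro _ hadj; exact h hadj.symm
        rw [Finset.erase_eq_of_notMem hu_not]
        exact hszr
    have htow' : ∀ v ∈ S', v ≠ r → ∃ w ∈ S', G.Adj v w ∧ f w < f v := by
      intro v hv hvr
      have hvS : v ∈ S := Finset.mem_of_mem_erase hv
      obtain ⟨w, hwS, hadj, hfw⟩ := htow v hvS hvr
      refine ⟨w, ?_, hadj, hfw⟩
      refine Finset.mem_erase.2 ⟨?_, hwS⟩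
      intro hwu; subst hwu
      have : f v ≤ f w := humax v (Finset.mem_erase.2 ⟨hvr, hvS⟩)
      omega
    have hr' : r ∈ S' := Finset.mem_erase.2 ⟨fun h => hur h.symm, hr⟩
    obtain ⟨c, hc1, hc2⟩ := IH S' (Finset.erase_ssubset huS) r L' hr' htow' hdeg' hdegr'
    refine ⟨Function.update c u α, ?_, ?_⟩
    · intro v hv
      rcases eq_or_ne v u with h | h
      · subst h; rw [Function.update_self]; exact hα
      · rw [Function.update_of_ne h]
        exact hsub v (hc1 v (Finset.mem_erase.2 ⟨h, hv⟩))
    · intro v hv w hw hadj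
      rcases eq_or_ne v u with hvu | hvu <;> rcases eq_or_ne w u with hwu | hwu
      · subst hvu; subst hwu; exact absurd hadj (G.irrefl)
      · subst hvu
        rw [Function.update_self, Function.update_of_ne hwu]
        have hwS' : w ∈ S' := Finset.mem_erase.2 ⟨hwu, hw⟩
        have := hc1 w hwS'
        rw [hL'] at this
        simp only [if_pos hadj] at this
        exact fun h => (Finset.ne_of_mem_erase this) h.symm
      · subst hwu
        rw [Function.update_self, Function.update_of_ne hvu]
        have hvS' : v ∈ S' := Finset.mem_erase.2 ⟨hvu, hv⟩
        have := hc1 v hvS'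
        rw [hL'] at this
        simp only [if_pos hadj.symm] at this
        exact Finset.ne_of_mem_erase this
      · rw [Function.update_of_ne hvu, Function.update_of_ne hwu]
        exact hc2 v (Finset.mem_erase.2 ⟨hvu, hv⟩) w (Finset.mem_erase.2 ⟨hwu, hw⟩) hadj

/-- In a connected set, a nonadjacent pair yields a "cherry": `a` adjacent to
nonadjacent `b ≠ c`. -/
theorem triple {S : Finset V} {x y : V} (hy : y ∈ S) (hxy : x ≠ y)
    (hnadj : ¬G.Adj x y) (hw : Wk G S x y) (hx : x ∈ S) :
    ∃ a ∈ S, ∃ b ∈ S, ∃ c ∈ S, G.Adj a b ∧ G.Adj a c ∧ b ≠ c ∧ ¬G.Adj b c := by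
  have Q : ∀ w, Wk G S w y → ∀ x', x' ∈ S → G.Adj x' w → ¬G.Adj x' y → x' ≠ y →
      ∃ a ∈ S, ∃ b ∈ S, ∃ c ∈ S, G.Adj a b ∧ G.Adj a c ∧ b ≠ c ∧ ¬G.Adj b c := by
    intro w hwk
    induction hwk using Relation.ReflTransGen.head_induction_on with
    | refl =>
      intro x' _ hadj hnadj' _
      exact absurd hadj hnadj'
    | head hrel hrest IH =>
      rename_i w u
      intro x' hx' hadj hnadjy hx'y
      by_cases hxu : x' = u
      · subst hxu
        by_cases hwy : w = y
        · subst hwy; exact absurd hadj hnadjy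
        · by_cases hwyadj : G.Adj w y
          · exact ⟨w, hrel.2.1, x', hx', y, hy, hadj.symm, hwyadj, hx'y, hnadjy⟩
          · exact IH w hrel.2.1 hrel.1 hwyadj hwy
      · by_cases hadjxu : G.Adj x' u
        · exact IH x' hx' hadjxu hnadjy hx'y
        · exact ⟨w, hrel.2.1, x', hx', u, hrel.2.2, hadj.symm, hrel.1, hxu, hadjxu⟩
  rcases Relation.ReflTransGen.cases_head hw with h | ⟨u, hrel, hrest⟩
  · exact absurd h hxy
  · exact Q u hrest x hx hrel.1 hnadj hxy

/-- Truncation: a walk to `w` starting in a closed set `T` stays in `T`. -/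
theorem trunc {A T : Finset V} {w : V} (hwT : w ∈ T)
    (hclosed : ∀ t s, t ∈ T → t ≠ w → s ∈ A → s ≠ w → G.Adj t s → s ∈ T) :
    ∀ t, Wk G A t w → t ∈ T → Wk G T t w := by
  intro t h
  induction h using Relation.ReflTransGen.head_induction_on with
  | refl => intro _; exact Relation.ReflTransGen.refl
  | head hrel hrest IH =>
    rename_i t' s
    intro htT
    by_cases htw : t' = w
    · subst htw; exact Relation.ReflTransGen.refl
    · by_cases hsw : s = w
      · subst hsw
        exact Relation.ReflTransGen.single ⟨hrel.1, htT, hwT⟩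
      · have hsT : s ∈ T := hclosed t' s htT htw hrel.2.2 hsw hrel.1
        exact Relation.ReflTransGen.head ⟨hrel.1, htT, hsT⟩ (IH hsT)

/-- Everything outside the component `K` of `A₁ - w` can reach `w` avoiding `K`. -/
theorem key1 {A₁ : Finset V} (hconn : ConnA G A₁) {w z : V} (hw : w ∈ A₁) :
    ∀ t ∈ A₁, t ∉ Comp G (A₁.erase w) z → Wk G (A₁ \ Comp G (A₁.erase w) z) t w := by
  intro t ht htK
  set K := Comp G (A₁.erase w) z with hK
  have hwK : w ∉ K := fun h => (Finset.ne_of_mem_erase (Comp_subset G h)) rfl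
  refine trunc G (A := A₁) (T := A₁ \ K) (Finset.mem_sdiff.2 ⟨hw, hwK⟩) ?_ t
    (hconn t ht w hw) (Finset.mem_sdiff.2 ⟨ht, htK⟩)
  intro t' s ht' ht'w hs hsw hadj
  refine Finset.mem_sdiff.2 ⟨hs, fun hsK => ?_⟩
  have ht'A : t' ∈ A₁.erase w := Finset.mem_erase.2 ⟨ht'w, (Finset.mem_sdiff.1 ht').1⟩
  exact (Finset.mem_sdiff.1 ht').2 (Comp_closed G hsK ht'A hadj.symm)

/-- minimality implies every vertex of the component is a non-cutvertex. -/
theorem claimA {A₁ : Finset V} (hconn : ConnA G A₁) (Forb : Finset V)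
    {w z : V} (hw : w ∈ A₁) (hz : z ∈ A₁.erase w)
    (hmin : ∀ u s, u ∈ A₁ → ¬ConnA G (A₁.erase u) → s ∈ A₁.erase u →
       (∀ t ∈ Comp G (A₁.erase u) s, t ∉ Forb) →
       (Comp G (A₁.erase w) z).card ≤ (Comp G (A₁.erase u) s).card)
    (hdisj : ∀ t ∈ Comp G (A₁.erase w) z, t ∉ Forb) :
    ∀ u ∈ Comp G (A₁.erase w) z, ConnA G (A₁.erase u) := by
  intro u hu
  by_contra hcut
  set K := Comp G (A₁.erase w) z with hKdef
  have hKA : K ⊆ A₁.erase w := Comp_subset G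
  have huAe : u ∈ A₁.erase w := hKA hu
  have huA : u ∈ A₁ := Finset.mem_of_mem_erase huAe
  have hwu : w ≠ u := fun h => (Finset.mem_erase.1 huAe).1 h.symm
  have hsub : A₁ \ K ⊆ A₁.erase u := by
    intro v hv
    rcases Finset.mem_sdiff.1 hv with ⟨hvA, hvK⟩
    exact Finset.mem_erase.2 ⟨fun h => hvK (h ▸ hu), hvA⟩
  -- find a vertex not connected to w in A₁ - u
  have : ¬ ∀ s' ∈ A₁.erase u, Wk G (A₁.erase u) s' w := by
    intro hall
    apply hcut
    intro a ha b hb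
    exact Wk.trans G (hall a ha) (Wk.symm G (hall b hb))
  push_neg at this
  obtain ⟨s', hs', hsw⟩ := this
  have hs'K : s' ∈ K := by
    by_contra hsK
    exact hsw (Wk.mono G hsub (key1 G hconn hw s' (Finset.mem_of_mem_erase hs') hsK))
  set K' := Comp G (A₁.erase u) s' with hK'def
  have hK'sub : K' ⊆ K.erase u := by
    intro v hv
    obtain ⟨hvA, hwk⟩ := (mem_Comp G).1 hv
    have hvK : v ∈ K := by
      by_contra hvK
      have h1 : Wk G (A₁.erase u) v w :=
        Wk.mono G hsub (key1 G hconn hw v (Finset.mem_of_mem_erase hvA) hvK)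
      exact hsw (Wk.trans G hwk h1)
    exact Finset.mem_erase.2 ⟨(Finset.mem_erase.1 hvA).1, hvK⟩
  have hlt : K'.card < K.card :=
    lt_of_le_of_lt (Finset.card_le_card hK'sub) (Finset.card_erase_lt_of_mem hu)
  have hdisj' : ∀ t ∈ K', t ∉ Forb := fun t ht =>
    hdisj t (Finset.mem_of_mem_erase (hK'sub ht))
  have := hmin u s' huA hcut hs' hdisj'
  rw [← hK'def] at this
  omega

/-- the hub `x₀` has a neighbor in every component of `(S - x₀) - w`. -/
theorem claimB {x₀ : V} {S : Finset V} (hx₀ : x₀ ∈ S)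
    (h2 : ∀ u ∈ S, ConnA G (S.erase u))
    {w z : V} (hw : w ∈ S.erase x₀) (hz : z ∈ (S.erase x₀).erase w) :
    ∃ b ∈ Comp G ((S.erase x₀).erase w) z, G.Adj x₀ b := by
  set A₁ := S.erase x₀ with hA₁
  set K := Comp G (A₁.erase w) z with hK
  by_contra hno
  push_neg at hno
  have hwS : w ∈ S := Finset.mem_of_mem_erase hw
  have hwx : w ≠ x₀ := Finset.ne_of_mem_erase hw
  have hinv : ∀ t, Wk G (S.erase w) z t → t ∈ K := by
    intro t h
    induction h with
    | refl => exact mem_Comp_self G hz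
    | @tail b' c' hab hbc ih =>
      by_cases hcx : c' = x₀
      · subst hcx
        exact absurd hbc.1 (fun had => hno b' ih had.symm)
      · have hc'A : c' ∈ A₁.erase w := by
          refine Finset.mem_erase.2 ⟨(Finset.mem_erase.1 hbc.2.2).1, ?_⟩
          exact Finset.mem_erase.2 ⟨hcx, Finset.mem_of_mem_erase hbc.2.2⟩
        exact Comp_closed G ih hc'A hbc.1
  have hzS : z ∈ S.erase w := by
    have h1 := Finset.mem_erase.1 hz
    refine Finset.mem_erase.2 ⟨h1.1, Finset.mem_of_mem_erase h1.2⟩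
  have hx0S : x₀ ∈ S.erase w := Finset.mem_erase.2 ⟨fun h => hwx h.symm, hx₀⟩
  have := hinv x₀ (h2 w hwS z hzS x₀ hx0S)
  have : x₀ ∈ A₁ := Finset.mem_of_mem_erase (Comp_subset G this)
  exact (Finset.mem_erase.1 this).1 rfl

/-- Lovász's lemma: a 2-connected set with min degree 3 and a nonadjacent pair
has a cherry `b ← a → c` with `b,c` nonadjacent whose removal keeps connectivity. -/
theorem abc {S : Finset V} (hconn : ConnA G S)
    (h2 : ∀ u ∈ S, ConnA G (S.erase u))
    (hdeg : ∀ v ∈ S, 3 ≤ degS G S v)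
    {x y : V} (hx : x ∈ S) (hy : y ∈ S) (hxy : x ≠ y) (hnadj : ¬G.Adj x y) :
    ∃ a ∈ S, ∃ b ∈ S, ∃ c ∈ S, G.Adj a b ∧ G.Adj a c ∧ b ≠ c ∧ ¬G.Adj b c ∧
      ConnA G ((S.erase b).erase c) := by
  classical
  by_cases h3 : ∀ b' ∈ S, ∀ c' ∈ S, ConnA G ((S.erase b').erase c')
  · obtain ⟨a, ha, b, hb, c, hc, h₁, h₂, h₃, h₄⟩ :=
      triple G hy hxy hnadj (hconn x hx y hy) hx
    exact ⟨a, ha, b, hb, c, hc, h₁, h₂, h₃, h₄, h3 b hb c hc⟩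
  · push_neg at h3
    obtain ⟨p, hp, q, hq, hnc⟩ := h3
    set A₁ := S.erase p with hA₁def
    have hA₁conn : ConnA G A₁ := h2 p hp
    have hqp : q ≠ p := by
      rintro rfl
      rw [Finset.erase_idem] at hnc
      exact hnc hA₁conn
    have hqA : q ∈ A₁ := Finset.mem_erase.2 ⟨hqp, hq⟩
    have hzex : ∃ z₀, z₀ ∈ A₁.erase q := by
      by_contra h
      push_neg at h
      exact hnc (fun a ha => absurd ha (h a))
    obtain ⟨z₀, hz₀⟩ := hzex
    -- first minimization
    let fam : Finset (V × V) := (A₁ ×ˢ A₁).filter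
      (fun pr => ¬ConnA G (A₁.erase pr.1) ∧ pr.2 ∈ A₁.erase pr.1)
    have hfam_ne : fam.Nonempty := by
      refine ⟨(q, z₀), Finset.mem_filter.2 ⟨?_, hnc, hz₀⟩⟩
      exact Finset.mk_mem_product hqA (Finset.mem_of_mem_erase hz₀)
    obtain ⟨pr₁, hpr₁, hmin₁⟩ := Finset.exists_min_image fam
      (fun pr => (Comp G (A₁.erase pr.1) pr.2).card) hfam_ne
    obtain ⟨hpr₁mem, hcut₁, hz₁⟩ := Finset.mem_filter.1 hpr₁
    set w₁ := pr₁.1 with hw₁def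
    set z₁ := pr₁.2 with hz₁def
    set K₁ := Comp G (A₁.erase w₁) z₁ with hK₁def
    have hw₁A : w₁ ∈ A₁ := (Finset.mem_product.1 hpr₁mem).1
    have hNC₁ : ∀ u ∈ K₁, ConnA G (A₁.erase u) := by
      refine claimA G hA₁conn ∅ hw₁A hz₁ ?_ (by simp)
      intro u s hu hcutu hs _
      exact hmin₁ (u, s) (Finset.mem_filter.2
        ⟨Finset.mk_mem_product hu (Finset.mem_of_mem_erase hs), hcutu, hs⟩)
    obtain ⟨b, hbK₁, hxb⟩ := claimB G hp h2 hw₁A hz₁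
    -- b basic facts
    have hbAe : b ∈ A₁.erase w₁ := Comp_subset G hbK₁
    have hbA : b ∈ A₁ := Finset.mem_of_mem_erase hbAe
    have hbS : b ∈ S := Finset.mem_of_mem_erase hbA
    have hbw₁ : b ≠ w₁ := (Finset.mem_erase.1 hbAe).1
    -- second minimization: a component avoiding K₁ ∪ {w₁}
    have : ¬ ∀ s' ∈ A₁.erase w₁, Wk G (A₁.erase w₁) z₁ s' := by
      intro hall
      exact hcut₁ (fun a ha b' hb' => Wk.trans G (Wk.symm G (hall a ha)) (hall b' hb'))
    push_neg at this
    obtain ⟨z', hz', hnwk⟩ := this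
    have hz'K₁ : z' ∉ K₁ := fun h => hnwk ((mem_Comp G).1 h).2
    set Forb := K₁ ∪ {w₁} with hForbdef
    let fam₂ : Finset (V × V) := (A₁ ×ˢ A₁).filter
      (fun pr => ¬ConnA G (A₁.erase pr.1) ∧ pr.2 ∈ A₁.erase pr.1 ∧
        ∀ t ∈ Comp G (A₁.erase pr.1) pr.2, t ∉ Forb)
    have hfam₂_ne : fam₂.Nonempty := by
      refine ⟨(w₁, z'), Finset.mem_filter.2
        ⟨Finset.mk_mem_product hw₁A (Finset.mem_of_mem_erase hz'), hcut₁, hz', ?_⟩⟩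
      intro t ht
      rw [hForbdef, Finset.mem_union, Finset.mem_singleton]
      rintro (htK₁ | rfl)
      · have e1 := Comp_eq_of_mem G ht
        have e2 := Comp_eq_of_mem G htK₁
        apply hz'K₁
        rw [hK₁def, ← e2, e1]
        exact mem_Comp_self G hz'
      · exact (Finset.mem_erase.1 (Comp_subset G ht)).1 rfl
    obtain ⟨pr₂, hpr₂, hmin₂⟩ := Finset.exists_min_image fam₂
      (fun pr => (Comp G (A₁.erase pr.1) pr.2).card) hfam₂_ne
    obtain ⟨hpr₂mem, hcut₂, hz₂, hdisj₂⟩ := Finset.mem_filter.1 hpr₂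
    set w₂ := pr₂.1 with hw₂def
    set z₂ := pr₂.2 with hz₂def
    set K₂ := Comp G (A₁.erase w₂) z₂ with hK₂def
    have hw₂A : w₂ ∈ A₁ := (Finset.mem_product.1 hpr₂mem).1
    have hNC₂ : ∀ u ∈ K₂, ConnA G (A₁.erase u) := by
      refine claimA G hA₁conn Forb hw₂A hz₂ ?_ hdisj₂
      intro u s hu hcutu hs hd
      exact hmin₂ (u, s) (Finset.mem_filter.2
        ⟨Finset.mk_mem_product hu (Finset.mem_of_mem_erase hs), hcutu, hs, hd⟩)
    obtain ⟨c, hcK₂, hxc⟩ := claimB G hp h2 hw₂A hz₂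
    -- c basic facts
    have hcAe : c ∈ A₁.erase w₂ := Comp_subset G hcK₂
    have hcA : c ∈ A₁ := Finset.mem_of_mem_erase hcAe
    have hcS : c ∈ S := Finset.mem_of_mem_erase hcA
    have hcw₂ : c ≠ w₂ := (Finset.mem_erase.1 hcAe).1
    have hcK₁ : c ∉ K₁ := fun h =>
      hdisj₂ c hcK₂ (Finset.mem_union_left _ h)
    have hcw₁ : c ≠ w₁ := fun h =>
      hdisj₂ c hcK₂ (Finset.mem_union_right _ (Finset.mem_singleton.2 h))
    have hbc : b ≠ c := fun h => hcK₁ (h ▸ hbK₁)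
    have hnadjbc : ¬G.Adj b c := fun hadj =>
      hcK₁ (Comp_closed G hbK₁ (Finset.mem_erase.2 ⟨hcw₁, hcA⟩) hadj)
    have hw₂K₁ : w₂ ∉ K₁ := fun h => hcut₂ (hNC₁ w₂ h)
    have hbw₂ : b ≠ w₂ := fun h => hw₂K₁ (h ▸ hbK₁)
    have hNCb : ConnA G (A₁.erase b) := hNC₁ b hbK₁
    have hNCc : ConnA G (A₁.erase c) := hNC₂ c hcK₂
    -- the target set
    set D := (S.erase b).erase c with hDdef
    have hmemD : ∀ t, t ∈ D ↔ t ∈ S ∧ t ≠ b ∧ t ≠ c := by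
      intro t
      rw [hDdef, Finset.mem_erase, Finset.mem_erase]
      tauto
    have hw₁S : w₁ ∈ S := Finset.mem_of_mem_erase hw₁A
    have hw₁D : w₁ ∈ D := (hmemD w₁).2 ⟨hw₁S, fun h => hbw₁ h.symm, fun h => hcw₁ h.symm⟩
    have hw₁K₁ : w₁ ∉ K₁ := fun h => (Finset.mem_erase.1 (Comp_subset G h)).1 rfl
    -- case: t outside K₁, t ≠ c
    have cased : ∀ t ∈ A₁, t ∉ K₁ → t ≠ c → Wk G D t w₁ := by
      intro t ht htK htc
      have hsubD : (A₁ \ K₁).erase c ⊆ D := by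
        intro v hv
        have h1 := Finset.mem_erase.1 hv
        have hvc := h1.1
        have hvA := (Finset.mem_sdiff.1 h1.2).1
        have hvK := (Finset.mem_sdiff.1 h1.2).2
        exact (hmemD v).2 ⟨Finset.mem_of_mem_erase hvA, fun h => hvK (h ▸ hbK₁), hvc⟩
      refine Wk.mono G hsubD ?_
      refine trunc G (A := A₁.erase c) (T := (A₁ \ K₁).erase c)
        (Finset.mem_erase.2 ⟨fun h => hcw₁ h.symm, Finset.mem_sdiff.2 ⟨hw₁A, hw₁K₁⟩⟩)
        ?_ t (hNCc t (Finset.mem_erase.2 ⟨htc, ht⟩) w₁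
          (Finset.mem_erase.2 ⟨fun h => hcw₁ h.symm, hw₁A⟩))
        (Finset.mem_erase.2 ⟨htc, Finset.mem_sdiff.2 ⟨ht, htK⟩⟩)
      intro t' s ht' ht'w hs hsw hadj
      obtain ⟨ht'c, ht'AK⟩ := Finset.mem_erase.1 ht'
      obtain ⟨ht'A, ht'K⟩ := Finset.mem_sdiff.1 ht'AK
      obtain ⟨hsc, hsA⟩ := Finset.mem_erase.1 hs
      refine Finset.mem_erase.2 ⟨hsc, Finset.mem_sdiff.2 ⟨hsA, ?_⟩⟩
      intro hsK
      exact ht'K (Comp_closed G hsK (Finset.mem_erase.2 ⟨ht'w, ht'A⟩) hadj.symm)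
    -- case: t in K₁
    have caseb : ∀ t ∈ K₁, t ≠ b → Wk G D t w₁ := by
      intro t ht htb
      have hsubD : (K₁ ∪ {w₁}).erase b ⊆ D := by
        intro v hv
        obtain ⟨hvb, hvm⟩ := Finset.mem_erase.1 hv
        rcases Finset.mem_union.1 hvm with hvK | hvw
        · exact (hmemD v).2 ⟨Finset.mem_of_mem_erase (Finset.mem_of_mem_erase
            (Comp_subset G hvK)), hvb, fun h => hcK₁ (h ▸ hvK)⟩
        · rw [Finset.mem_singleton] at hvw
          subst hvw
          exact hw₁D
      refine Wk.mono G hsubD ?_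
      refine trunc G (A := A₁.erase b) (T := (K₁ ∪ {w₁}).erase b)
        (Finset.mem_erase.2 ⟨fun h => hbw₁ h.symm,
          Finset.mem_union_right _ (Finset.mem_singleton.2 rfl)⟩)
        ?_ t (hNCb t (Finset.mem_erase.2 ⟨htb, Finset.mem_of_mem_erase (Comp_subset G ht)⟩)
          w₁ (Finset.mem_erase.2 ⟨fun h => hbw₁ h.symm, hw₁A⟩))
        (Finset.mem_erase.2 ⟨htb, Finset.mem_union_left _ ht⟩)
      intro t' s ht' ht'w hs hsw hadj
      obtain ⟨ht'b, ht'm⟩ := Finset.mem_erase.1 ht'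
      have ht'K : t' ∈ K₁ := by
        rcases Finset.mem_union.1 ht'm with h | h
        · exact h
        · exact absurd (Finset.mem_singleton.1 h) ht'w
      obtain ⟨hsb, hsA⟩ := Finset.mem_erase.1 hs
      have hsK : s ∈ K₁ := Comp_closed G ht'K
        (Finset.mem_erase.2 ⟨hsw, hsA⟩) hadj
      exact Finset.mem_erase.2 ⟨hsb, Finset.mem_union_left _ hsK⟩
    -- every vertex of D reaches w₁ within D
    have hall : ∀ t ∈ D, Wk G D t w₁ := by
      intro t ht
      obtain ⟨htS, htb, htc⟩ := (hmemD t).1 ht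
      by_cases htp : t = p
      · subst htp
        have hbig : 3 ≤ (S.filter (fun w => G.Adj t w)).card := hdeg t htS
        have hne : ((S.filter (fun w => G.Adj t w)) \ {b, c}).Nonempty := by
          rw [← Finset.card_pos]
          have h1 : ({b, c} : Finset V).card ≤ 2 := Finset.card_insert_le _ _ |>.trans
            (by simp)
          have h2 := Finset.le_card_sdiff ({b, c} : Finset V)
            (S.filter (fun w => G.Adj t w))
          omega
        obtain ⟨e, he⟩ := hne
        obtain ⟨hem, henbc⟩ := Finset.mem_sdiff.1 he
        obtain ⟨heS, headj⟩ := Finset.mem_filter.1 hem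
        have heb : e ≠ b := fun h => henbc (by simp [h])
        have hec : e ≠ c := fun h => henbc (by simp [h])
        have heD : e ∈ D := (hmemD e).2 ⟨heS, heb, hec⟩
        have heA : e ∈ A₁ := Finset.mem_erase.2 ⟨fun h => G.irrefl (h ▸ headj), heS⟩
        have hrest : Wk G D e w₁ := by
          by_cases heK : e ∈ K₁
          · exact caseb e heK heb
          · exact cased e heA heK hec
        exact Relation.ReflTransGen.head ⟨headj, ht, heD⟩ hrest
      · have htA : t ∈ A₁ := Finset.mem_erase.2 ⟨htp, htS⟩
        by_cases htK : t ∈ K₁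
        · exact caseb t htK htb
        · exact cased t htA htK htc
    have hDconn : ConnA G D := fun a' ha' b' hb' =>
      Wk.trans G (hall a' ha') (Wk.symm G (hall b' hb'))
    exact ⟨p, hp, b, hbS, c, hcS, hxb, hxc, hbc, hnadjbc, hDconn⟩

theorem pair_eq {S : Finset V} (hdeg : ∀ v ∈ S, degS G S v = 2) {v a b : V}
    (hv : v ∈ S) (ha : a ∈ S) (hb : b ∈ S) (hva : G.Adj v a) (hvb : G.Adj v b)
    (hab : a ≠ b) : ∀ w ∈ S, G.Adj v w → w = a ∨ w = b := by
  intro w hw hvw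
  have h2 : (S.filter (fun t => G.Adj v t)).card = 2 := hdeg v hv
  have hsub : ({a, b} : Finset V) ⊆ S.filter (fun t => G.Adj v t) := by
    intro t ht
    rcases Finset.mem_insert.1 ht with rfl | ht
    · exact Finset.mem_filter.2 ⟨ha, hva⟩
    · rw [Finset.mem_singleton] at ht; subst ht
      exact Finset.mem_filter.2 ⟨hb, hvb⟩
  have hcard2 : ({a, b} : Finset V).card = 2 := Finset.card_pair hab
  have heq := Finset.eq_of_subset_of_card_le hsub (by rw [h2, hcard2])
  have hwmem : w ∈ ({a, b} : Finset V) := by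
    rw [heq]; exact Finset.mem_filter.2 ⟨hw, hvw⟩
  simpa using hwmem

open Classical in
noncomputable def other (S : Finset V) (v a : V) : V :=
  if h : ∃ w, w ∈ S ∧ G.Adj v w ∧ w ≠ a then h.choose else v

theorem other_spec {S : Finset V} {v a : V}
    (h : ∃ w, w ∈ S ∧ G.Adj v w ∧ w ≠ a) :
    other G S v a ∈ S ∧ G.Adj v (other G S v a) ∧ other G S v a ≠ a := by
  rw [other, dif_pos h]
  exact h.choose_spec

theorem other_ex {S : Finset V} (hdeg : ∀ v ∈ S, degS G S v = 2) {v a : V}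
    (hv : v ∈ S) (ha : a ∈ S) (hva : G.Adj v a) :
    ∃ w, w ∈ S ∧ G.Adj v w ∧ w ≠ a := by
  have h2 : (S.filter (fun t => G.Adj v t)).card = 2 := hdeg v hv
  have ha' : a ∈ S.filter (fun t => G.Adj v t) := Finset.mem_filter.2 ⟨ha, hva⟩
  have hpos : 0 < ((S.filter (fun t => G.Adj v t)).erase a).card := by
    rw [Finset.card_erase_of_mem ha', h2]
    norm_num
  obtain ⟨w, hw⟩ := Finset.card_pos.1 hpos
  obtain ⟨hwa, hwf⟩ := Finset.mem_erase.1 hw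
  obtain ⟨hwS, hadj⟩ := Finset.mem_filter.1 hwf
  exact ⟨w, hwS, hadj, hwa⟩

theorem cycleEnum {S : Finset V} (hconn : ConnA G S) (hcard : 3 ≤ S.card)
    (hdeg : ∀ v ∈ S, degS G S v = 2) :
    ∃ f : ℕ → V,
      (∀ i, f i ∈ S) ∧ (∀ i, G.Adj (f i) (f (i+1))) ∧ f S.card = f 0 ∧
      (∀ i j, i < S.card → j < S.card → f i = f j → i = j) ∧
      (∀ i, ∀ w ∈ S, G.Adj (f (i+1)) w → w = f i ∨ w = f (i+2)) ∧
      (∀ w ∈ S, G.Adj (f 0) w → w = f 1 ∨ w = f (S.card - 1)) ∧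
      (∀ w ∈ S, ∃ i < S.card, f i = w) := by
  classical
  -- starting vertex and neighbor
  have hSne : S.Nonempty := Finset.card_pos.1 (by omega)
  obtain ⟨v₀, hv₀⟩ := hSne
  have hnb : 0 < (S.filter (fun t => G.Adj v₀ t)).card := by
    have h2 : (S.filter (fun t => G.Adj v₀ t)).card = 2 := hdeg v₀ hv₀
    omega
  obtain ⟨a₀, ha₀⟩ := Finset.card_pos.1 hnb
  obtain ⟨ha₀S, ha₀adj⟩ := Finset.mem_filter.1 ha₀
  -- the sequence
  set g : ℕ → V × V := fun n =>
    Nat.rec (v₀, a₀) (fun _ pr => (pr.2, other G S pr.2 pr.1)) n with hgdef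
  set f : ℕ → V := fun n => (g n).1 with hfdef
  have hf0 : f 0 = v₀ := rfl
  have hf1 : f 1 = a₀ := rfl
  have hfrec : ∀ n, f (n + 2) = other G S (f (n+1)) (f n) := fun n => rfl
  -- invariant
  have Inv : ∀ i, f i ∈ S ∧ f (i+1) ∈ S ∧ G.Adj (f i) (f (i+1)) ∧ f (i+2) ≠ f i := by
    intro i
    induction i with
    | zero =>
      refine ⟨hv₀, ha₀S, ha₀adj, ?_⟩
      exact (other_spec G (other_ex G hdeg ha₀S hv₀ ha₀adj.symm)).2.2
    | succ n ih =>
      obtain ⟨h1, h2, h3, h4⟩ := ih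
      have hex := other_ex G hdeg h2 h1 h3.symm
      have hsp := other_spec G hex
      rw [← hfrec n] at hsp
      refine ⟨h2, hsp.1, hsp.2.1, ?_⟩
      have hex2 := other_ex G hdeg hsp.1 h2 hsp.2.1.symm
      have hsp2 := other_spec G hex2
      rw [← hfrec (n+1)] at hsp2
      exact hsp2.2.2
  have hfS : ∀ i, f i ∈ S := fun i => (Inv i).1
  have hadj : ∀ i, G.Adj (f i) (f (i+1)) := fun i => (Inv i).2.2.1
  have hne2 : ∀ i, f (i+2) ≠ f i := fun i => (Inv i).2.2.2
  have hne1 : ∀ i, f i ≠ f (i+1) := fun i => (hadj i).ne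
  have hchar : ∀ i, ∀ w ∈ S, G.Adj (f (i+1)) w → w = f i ∨ w = f (i+2) := by
    intro i w hw hvw
    refine pair_eq G hdeg (hfS (i+1)) (hfS i) (hfS (i+2)) (hadj i).symm
      (hadj (i+1)) (fun h => hne2 i h.symm) w hw hvw
  -- pigeonhole: a repetition exists
  have hPex : ∃ m, ∃ j < m, f j = f m := by
    have hmap : ∀ i ∈ Finset.range (S.card + 1), f i ∈ S := fun i _ => hfS i
    have hlt : S.card < (Finset.range (S.card + 1)).card := by
      rw [Finset.card_range]; omega
    obtain ⟨i, hi, j, hj, hij, hfij⟩ :=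
      Finset.exists_ne_map_eq_of_card_lt_of_maps_to hlt hmap
    rcases Nat.lt_or_ge i j with h | h
    · exact ⟨j, i, h, hfij⟩
    · have : j < i := by omega
      exact ⟨i, j, this, hfij.symm⟩
  set m₀ := Nat.find hPex with hm₀def
  obtain ⟨j₀, hj₀lt, hj₀eq⟩ := Nat.find_spec hPex
  rw [← hm₀def] at hj₀lt hj₀eq
  have hminim : ∀ m' < m₀, ¬ ∃ j < m', f j = f m' := fun m' hm' => Nat.find_min hPex hm'
  have hinjlt : ∀ i j, i < j → j < m₀ → f i ≠ f j := by
    intro i j hij hj h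
    exact hminim j hj ⟨i, hij, h⟩
  -- the repetition closes the cycle: j₀ = 0
  have hm₀1 : 1 ≤ m₀ := by omega
  have hj₀0 : j₀ = 0 := by
    by_contra hj0
    have hj₀1 : 1 ≤ j₀ := Nat.pos_of_ne_zero hj0
    have hm₀j₀ : j₀ + 2 ≤ m₀ := by
      rcases Nat.lt_or_ge (j₀ + 1) m₀ with h | h
      · omega
      · have : m₀ = j₀ + 1 := by omega
        rw [this] at hj₀eq
        exact absurd hj₀eq (hne1 j₀)
    have hadj' : G.Adj (f j₀) (f (m₀ - 1)) := by
      have := hadj (m₀ - 1)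
      rw [Nat.sub_add_cancel hm₀1] at this
      rw [← hj₀eq] at this
      exact this.symm
    have hcenter := hchar (j₀ - 1) (f (m₀ - 1)) (hfS (m₀ - 1))
    rw [Nat.sub_add_cancel hj₀1] at hcenter
    have : f (m₀ - 1) = f (j₀ - 1) ∨ f (m₀ - 1) = f (j₀ - 1 + 2) := hcenter hadj'
    rcases this with h | h
    · exact hminim (m₀ - 1) (by omega) ⟨j₀ - 1, by omega, h.symm⟩
    · have hidx : j₀ - 1 + 2 = j₀ + 1 := by omega
      rw [hidx] at h
      rcases Nat.lt_or_ge (j₀ + 1) (m₀ - 1) with h' | h'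
      · exact hminim (m₀ - 1) (by omega) ⟨j₀ + 1, h', h.symm⟩
      · have : m₀ = j₀ + 2 := by omega
        rw [this] at hj₀eq
        exact hne2 j₀ hj₀eq.symm
  rw [hj₀0] at hj₀eq
  have hper : f m₀ = f 0 := hj₀eq.symm
  have hm₀3 : 3 ≤ m₀ := by
    rcases Nat.lt_or_ge m₀ 3 with h | h
    · interval_cases m₀
      · exact absurd hper.symm (hne1 0)
      · exact absurd hper (hne2 0)
    · exact h
  -- pair at f 0
  have hpair0 : ∀ w ∈ S, G.Adj (f 0) w → w = f 1 ∨ w = f (m₀ - 1) := by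
    intro w hw hvw
    have hadjm : G.Adj (f 0) (f (m₀ - 1)) := by
      have := hadj (m₀ - 1)
      rw [Nat.sub_add_cancel hm₀1, hper] at this
      exact this.symm
    refine pair_eq G hdeg (hfS 0) (hfS 1) (hfS (m₀ - 1)) (hadj 0) hadjm ?_ w hw hvw
    exact hinjlt 1 (m₀ - 1) (by omega) (by omega)
  -- closure
  have hclosed : ∀ i < m₀, ∀ w ∈ S, G.Adj (f i) w → ∃ i' < m₀, f i' = w := by
    intro i hi w hw hvw
    rcases Nat.eq_zero_or_pos i with rfl | hipos
    · rcases hpair0 w hw hvw with h | h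
      · exact ⟨1, by omega, h.symm⟩
      · exact ⟨m₀ - 1, by omega, h.symm⟩
    · have hcent := hchar (i - 1) w hw
      rw [Nat.sub_add_cancel hipos] at hcent
      rcases hcent hvw with h | h
      · exact ⟨i - 1, by omega, h.symm⟩
      · have hidx : i - 1 + 2 = i + 1 := by omega
        rw [hidx] at h
        rcases Nat.lt_or_ge (i + 1) m₀ with h' | h'
        · exact ⟨i + 1, h', h.symm⟩
        · have : i + 1 = m₀ := by omega
          rw [this, hper] at h
          exact ⟨0, by omega, h.symm⟩
  -- surjectivity
  have hsurj : ∀ w ∈ S, ∃ i < m₀, f i = w := by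
    intro w hw
    have hwk : Wk G S (f 0) w := hconn (f 0) (hfS 0) w hw
    induction hwk with
    | refl => exact ⟨0, by omega, rfl⟩
    | @tail b' c' hab hbc ih =>
      obtain ⟨i, hi, hieq⟩ := ih hbc.2.1
      exact hclosed i hi c' hbc.2.2 (hieq ▸ hbc.1)
  -- m₀ = S.card
  have hm₀card : m₀ = S.card := by
    have hinj : Set.InjOn f (Finset.range m₀) := by
      intro i hi j hj hij
      simp only [Finset.coe_range, Set.mem_Iio] at hi hj
      rcases Nat.lt_trichotomy i j with h | h | h
      · exact absurd hij (hinjlt i j h hj)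
      · exact h
      · exact absurd hij.symm (hinjlt j i h hi)
    have h1 : ((Finset.range m₀).image f).card = m₀ := by
      rw [Finset.card_image_of_injOn hinj, Finset.card_range]
    have h2 : (Finset.range m₀).image f = S := by
      apply Finset.Subset.antisymm
      · intro w hw
        obtain ⟨i, _, rfl⟩ := Finset.mem_image.1 hw
        exact hfS i
      · intro w hw
        obtain ⟨i, hi, hieq⟩ := hsurj w hw
        exact Finset.mem_image.2 ⟨i, Finset.mem_range.2 hi, hieq⟩
    rw [← h1, h2]
  rw [hm₀card] at hinjlt hper hpair0 hsurj
  refine ⟨f, hfS, hadj, hper, ?_, hchar, hpair0, hsurj⟩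
  intro i j hi hj hij
  rcases Nat.lt_trichotomy i j with h | h | h
  · exact absurd hij (hinjlt i j h hj)
  · exact h
  · exact absurd hij.symm (hinjlt j i h hi)

/-- greedy coloring from connectivity, with a root having slack. -/
theorem greedyConn {S : Finset V} {r : V} (L : V → Finset ℕ) (hr : r ∈ S)
    (hcw : ∀ v ∈ S, Wk G S r v)
    (hsz : ∀ v ∈ S, v ≠ r → degS G S v ≤ (L v).card)
    (hszr : degS G S r < (L r).card) :
    ∃ c : V → ℕ, (∀ v ∈ S, c v ∈ L v) ∧
      ∀ v ∈ S, ∀ w ∈ S, G.Adj v w → c v ≠ c w := by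
  refine greedy G (fdist G S r) S r L hr ?_ hsz hszr
  intro v hv hvr
  exact fdist_toward G hr hv hvr (hcw v hv)

/-- The main dichotomy for a 2-connected set with list sizes at least degrees:
either a proper coloring from the lists exists, or the set is an odd cycle. -/
theorem main2conn {S : Finset V} (L : V → Finset ℕ)
    (hcard : 3 ≤ S.card)
    (hconn : ConnA G S)
    (h2 : ∀ u ∈ S, ConnA G (S.erase u))
    (hsize : ∀ v ∈ S, degS G S v ≤ (L v).card)
    {x y : V} (hx : x ∈ S) (hy : y ∈ S) (hxy : x ≠ y) (hnadj : ¬G.Adj x y) :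
    (∃ c : V → ℕ, (∀ v ∈ S, c v ∈ L v) ∧
      ∀ v ∈ S, ∀ w ∈ S, G.Adj v w → c v ≠ c w) ∨
    ((∀ v ∈ S, degS G S v = 2) ∧ Odd S.card) := by
  classical
  -- Case 1 : some vertex has slack
  by_cases hslack : ∃ v ∈ S, degS G S v < (L v).card
  · obtain ⟨r, hr, hrs⟩ := hslack
    exact Or.inl (greedyConn G L hr (fun v hv => hconn r hr v hv)
      (fun v hv _ => hsize v hv) hrs)
  · push_neg at hslack
    have heq : ∀ v ∈ S, degS G S v = (L v).card := fun v hv =>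
      le_antisymm (hsize v hv) (hslack v hv)
    -- Case 2 : two adjacent vertices with different lists
    by_cases hLne : ∃ u ∈ S, ∃ v ∈ S, G.Adj u v ∧ L u ≠ L v
    · left
      obtain ⟨u₀, hu₀, v₀, hv₀, hadj₀, hne₀⟩ := hLne
      -- find an ordered pair (u,v) adjacent with some α ∈ L u \ L v
      have hpick : ∃ u ∈ S, ∃ v ∈ S, ∃ α, G.Adj u v ∧ α ∈ L u ∧ α ∉ L v := by
        by_cases h : ∃ α ∈ L u₀, α ∉ L v₀
        · obtain ⟨α, h1, h2⟩ := h
          exact ⟨u₀, hu₀, v₀, hv₀, α, hadj₀, h1, h2⟩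
        · push_neg at h
          have hsub : L u₀ ⊆ L v₀ := h
          have : ∃ α ∈ L v₀, α ∉ L u₀ := by
            by_contra h'
            push_neg at h'
            exact hne₀ (Finset.Subset.antisymm hsub h')
          obtain ⟨α, h1, h2⟩ := this
          exact ⟨v₀, hv₀, u₀, hu₀, α, hadj₀.symm, h1, h2⟩
      obtain ⟨u, hu, v, hv, α, hadj, hαu, hαv⟩ := hpick
      have hvu : v ≠ u := fun h => G.irrefl (h ▸ hadj)
      set S' := S.erase u with hS'def
      set L' := fun t => if G.Adj u t then (L t).erase α else L t with hL'def
      have hfilter : ∀ t, S'.filter (fun w => G.Adj t w)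
          = (S.filter (fun w => G.Adj t w)).erase u := by
        intro t; rw [hS'def, Finset.filter_erase]
      have hvS' : v ∈ S' := Finset.mem_erase.2 ⟨hvu, hv⟩
      have hcw : ∀ t ∈ S', Wk G S' v t := fun t ht => h2 u hu v hvS' t ht
      have hsz' : ∀ t ∈ S', t ≠ v → degS G S' t ≤ (L' t).card := by
        intro t ht htv
        have htS : t ∈ S := Finset.mem_of_mem_erase ht
        rw [degS, hfilter t, hL'def]
        by_cases hadjut : G.Adj u t
        · simp only [if_pos hadjut]
          have hmem : u ∈ S.filter (fun w => G.Adj t w) :=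
            Finset.mem_filter.2 ⟨hu, hadjut.symm⟩
          rw [Finset.card_erase_of_mem hmem]
          have h1 := hsize t htS
          have h2' : (L t).card - 1 ≤ ((L t).erase α).card := Finset.pred_card_le_card_erase
          rw [degS] at h1
          omega
        · simp only [if_neg hadjut]
          have hmem : u ∉ S.filter (fun w => G.Adj t w) := by
            simp only [Finset.mem_filter, not_and]
            intro _ h; exact hadjut h.symm
          rw [Finset.erase_eq_of_notMem hmem]
          exact hsize t htS
      have hszr' : degS G S' v < (L' v).card := by
        rw [degS, hfilter v, hL'def]
        simp only [if_pos hadj]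
        have hmem : u ∈ S.filter (fun w => G.Adj v w) :=
          Finset.mem_filter.2 ⟨hu, hadj.symm⟩
        rw [Finset.card_erase_of_mem hmem, Finset.erase_eq_of_notMem hαv]
        have h1 := heq v hv
        have hpos : 0 < (S.filter (fun w => G.Adj v w)).card := Finset.card_pos.2 ⟨u, hmem⟩
        rw [degS] at h1
        omega
      obtain ⟨c, hc1, hc2⟩ := greedyConn G L' hvS' hcw hsz' hszr'
      refine ⟨Function.update c u α, ?_, ?_⟩
      · intro t ht
        by_cases htu : t = u
        · subst htu; rw [Function.update_self]; exact hαu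
        · rw [Function.update_of_ne htu]
          have := hc1 t (Finset.mem_erase.2 ⟨htu, ht⟩)
          rw [hL'def] at this
          by_cases hadjut : G.Adj u t
          · simp only [if_pos hadjut] at this
            exact Finset.mem_of_mem_erase this
          · simpa [if_neg hadjut] using this
      · intro t ht w hw htw
        by_cases htu : t = u <;> by_cases hwu : w = u
        · subst htu; subst hwu; exact absurd htw (G.irrefl)
        · subst htu
          rw [Function.update_self, Function.update_of_ne hwu]
          have := hc1 w (Finset.mem_erase.2 ⟨hwu, hw⟩)
          rw [hL'def] at this
          simp only [if_pos htw] at this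
          exact fun h => (Finset.ne_of_mem_erase this) h.symm
        · subst hwu
          rw [Function.update_of_ne htu, Function.update_self]
          have := hc1 t (Finset.mem_erase.2 ⟨htu, ht⟩)
          rw [hL'def] at this
          simp only [if_pos htw.symm] at this
          exact Finset.ne_of_mem_erase this
        · rw [Function.update_of_ne htu, Function.update_of_ne hwu]
          exact hc2 t (Finset.mem_erase.2 ⟨htu, ht⟩) w (Finset.mem_erase.2 ⟨hwu, hw⟩) htw
    · -- all adjacent lists are equal, hence constant on S
      push_neg at hLne
      have hwkeq : ∀ a b : V, Wk G S a b → L a = L b := by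
        intro a b h
        induction h with
        | refl => rfl
        | @tail b' c' hab hbc ih => exact ih.trans (hLne b' hbc.2.1 c' hbc.2.2 hbc.1)
      have hconst : ∀ v ∈ S, L v = L x := fun v hv =>
        (hwkeq x v (hconn x hx v hv)).symm
      set A := L x with hAdef
      set d := A.card with hddef
      have hreg : ∀ v ∈ S, degS G S v = d := by
        intro v hv
        rw [heq v hv, hconst v hv]
      -- small d impossible
      rcases Nat.lt_or_ge d 2 with hdlt | hdge
      · exfalso
        interval_cases d
        · have h0 : degS G S x = 0 := hreg x hx
          rcases Relation.ReflTransGen.cases_head (hconn x hx y hy) with h | ⟨w, hrel, _⟩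
          · exact hxy h
          · have : w ∈ S.filter (fun t => G.Adj x t) := Finset.mem_filter.2 ⟨hrel.2.2, hrel.1⟩
            rw [degS] at h0
            rw [Finset.card_eq_zero.1 h0] at this
            exact absurd this (Finset.notMem_empty w)
        · -- d = 1
          obtain ⟨u, huf⟩ := Finset.card_eq_one.1 (hreg x hx)
          have huS : u ∈ S ∧ G.Adj x u := by
            have : u ∈ S.filter (fun t => G.Adj x t) := by rw [huf]; exact Finset.mem_singleton_self u
            exact ⟨(Finset.mem_filter.1 this).1, (Finset.mem_filter.1 this).2⟩
          have hufu : S.filter (fun t => G.Adj u t) = {x} := by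
            obtain ⟨w', hw'⟩ := Finset.card_eq_one.1 (hreg u huS.1)
            have hxmem : x ∈ S.filter (fun t => G.Adj u t) :=
              Finset.mem_filter.2 ⟨hx, huS.2.symm⟩
            rw [hw'] at hxmem ⊢
            rw [Finset.mem_singleton.1 hxmem]
          have hinv : ∀ t t', Wk G S t t' → (t = x ∨ t = u) → (t' = x ∨ t' = u) := by
            intro t t' h
            induction h with
            | refl => exact id
            | @tail b' c' hab hbc ih =>
              intro ht
              rcases ih ht with rfl | rfl
              · right
                have : c' ∈ S.filter (fun t => G.Adj b' t) := Finset.mem_filter.2 ⟨hbc.2.2, hbc.1⟩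
                rw [huf] at this
                exact Finset.mem_singleton.1 this
              · left
                have : c' ∈ S.filter (fun t => G.Adj b' t) := Finset.mem_filter.2 ⟨hbc.2.2, hbc.1⟩
                rw [hufu] at this
                exact Finset.mem_singleton.1 this
          have hbig : (S \ {x, u}).Nonempty := by
            rw [← Finset.card_pos]
            have h1 : ({x, u} : Finset V).card ≤ 2 := Finset.card_insert_le _ _ |>.trans (by simp)
            have h2 := Finset.le_card_sdiff ({x, u} : Finset V) S
            omega
          obtain ⟨z, hz⟩ := hbig
          obtain ⟨hzS, hznot⟩ := Finset.mem_sdiff.1 hz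
          rcases hinv x z (hconn x hx z hzS) (Or.inl rfl) with rfl | rfl
          · exact hznot (by simp)
          · exact hznot (by simp)
      rcases Nat.lt_or_ge d 3 with hd2 | hd3
      · -- d = 2 : the cycle case
        have hd2' : d = 2 := by omega
        have hdeg2 : ∀ v ∈ S, degS G S v = 2 := fun v hv => hd2' ▸ hreg v hv
        rcases Nat.even_or_odd S.card with hev | hodd
        · -- even cycle : 2-color it
          left
          obtain ⟨α, β, hαβ, hA⟩ := Finset.card_eq_two.1 (hd2' ▸ hddef.symm)
          obtain ⟨f, hfS, hfadj, hper, hinj, hchar, hpair0, hsurj⟩ :=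
            cycleEnum G hconn hcard hdeg2
          set n := S.card with hndef
          have hn3 : 3 ≤ n := hcard
          set c : V → ℕ := fun w =>
            if h : ∃ i, i < n ∧ f i = w then (if Even h.choose then α else β) else 0
            with hcdef
          have hcval : ∀ i, i < n → c (f i) = if Even i then α else β := by
            intro i hi
            have h : ∃ j, j < n ∧ f j = f i := ⟨i, hi, rfl⟩
            have hch : h.choose = i := hinj _ _ h.choose_spec.1 hi h.choose_spec.2
            rw [hcdef]
            simp only [dif_pos h, hch]
          refine ⟨c, ?_, ?_⟩
          · intro w hw
            obtain ⟨i, hi, rfl⟩ := hsurj w hw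
            rw [hconst _ hw, hA, hcval i hi]
            by_cases he : Even i <;> simp [he]
          · intro w₁ hw₁ w₂ hw₂ hadj
            obtain ⟨i, hi, rfl⟩ := hsurj w₁ hw₁
            obtain ⟨j, hj, rfl⟩ := hsurj w₂ hw₂
            have hev' : n % 2 = 0 := Nat.even_iff.1 hev
            have hmod : i % 2 ≠ j % 2 := by
              rcases Nat.eq_zero_or_pos i with rfl | hipos
              · rcases hpair0 (f j) hw₂ hadj with h | h
                · have : j = 1 := hinj j 1 hj (by omega) h
                  omega
                · have : j = n - 1 := hinj j (n-1) hj (by omega) h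
                  omega
              · have hcent := hchar (i - 1) (f j) hw₂
                rw [Nat.sub_add_cancel hipos] at hcent
                rcases hcent hadj with h | h
                · have : j = i - 1 := hinj j (i-1) hj (by omega) h
                  omega
                · have hidx : i - 1 + 2 = i + 1 := by omega
                  rw [hidx] at h
                  rcases Nat.lt_or_ge (i+1) n with h' | h'
                  · have : j = i + 1 := hinj j (i+1) hj h' h
                    omega
                  · have hin : i + 1 = n := by omega
                    rw [hin, hper] at h
                    have : j = 0 := hinj j 0 hj (by omega) h
                    omega
            rw [hcval i hi, hcval j hj]
            by_cases hei : Even i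
            · have hej : ¬ Even j := by rw [Nat.even_iff] at hei ⊢; omega
              rw [if_pos hei, if_neg hej]; exact hαβ
            · have hej : Even j := by rw [Nat.even_iff] at hei ⊢; omega
              rw [if_neg hei, if_pos hej]; exact fun h => hαβ h.symm
        · exact Or.inr ⟨hdeg2, hodd⟩
      · -- d ≥ 3 : use the abc lemma
        left
        have hdeg3 : ∀ v ∈ S, 3 ≤ degS G S v := fun v hv => (hreg v hv).symm ▸ hd3
        obtain ⟨a, ha, b, hb, c', hc', hab, hac, hbc, hnadjbc, hDconn⟩ :=
          abc G hconn h2 hdeg3 hx hy hxy hnadj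
        have hAne : A.Nonempty := Finset.card_pos.1 (by omega)
        obtain ⟨α, hα⟩ := hAne
        set S' := (S.erase b).erase c' with hS'def
        have hmemS' : ∀ t, t ∈ S' ↔ t ∈ S ∧ t ≠ b ∧ t ≠ c' := by
          intro t
          rw [hS'def, Finset.mem_erase, Finset.mem_erase]
          tauto
        have haS' : a ∈ S' := (hmemS' a).2 ⟨ha, hab.ne, hac.ne⟩
        set L' := fun t => if G.Adj t b ∨ G.Adj t c' then A.erase α else A with hL'def
        have hfilter2 : ∀ t, S'.filter (fun w => G.Adj t w)
            = ((S.filter (fun w => G.Adj t w)).erase b).erase c' := by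
          intro t
          rw [hS'def, Finset.filter_erase, Finset.filter_erase]
        have hsz' : ∀ t ∈ S', t ≠ a → degS G S' t ≤ (L' t).card := by
          intro t ht hta
          obtain ⟨htS, htb, htc⟩ := (hmemS' t).1 ht
          rw [degS, hfilter2 t, hL'def]
          beta_reduce
          by_cases hcond : G.Adj t b ∨ G.Adj t c'
          · rw [if_pos hcond, Finset.card_erase_of_mem hα]
            have hd : (S.filter (fun w => G.Adj t w)).card = d := hreg t htS
            have hle : (((S.filter (fun w => G.Adj t w)).erase b).erase c').card
                ≤ (S.filter (fun w => G.Adj t w)).card - 1 := by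
              rcases hcond with h | h
              · have hbm : b ∈ S.filter (fun w => G.Adj t w) := Finset.mem_filter.2 ⟨hb, h⟩
                calc (((S.filter (fun w => G.Adj t w)).erase b).erase c').card
                    ≤ ((S.filter (fun w => G.Adj t w)).erase b).card := Finset.card_erase_le
                  _ = (S.filter (fun w => G.Adj t w)).card - 1 :=
                      Finset.card_erase_of_mem hbm
              · have hcm : c' ∈ (S.filter (fun w => G.Adj t w)).erase b :=
                  Finset.mem_erase.2 ⟨hbc.symm, Finset.mem_filter.2 ⟨hc', h⟩⟩
                calc (((S.filter (fun w => G.Adj t w)).erase b).erase c').card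
                    = ((S.filter (fun w => G.Adj t w)).erase b).card - 1 :=
                      Finset.card_erase_of_mem hcm
                  _ ≤ (S.filter (fun w => G.Adj t w)).card - 1 :=
                      Nat.sub_le_sub_right Finset.card_erase_le 1
            omega
          · rw [if_neg hcond]
            push_neg at hcond
            have hb' : b ∉ S.filter (fun w => G.Adj t w) := by
              simp only [Finset.mem_filter, not_and]; intro _ h; exact hcond.1 h
            have hc'' : c' ∉ S.filter (fun w => G.Adj t w) :=
              fun hmem => hcond.2 (Finset.mem_filter.1 hmem).2
            rw [Finset.erase_eq_of_notMem hb', Finset.erase_eq_of_notMem hc'']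
            have := hreg t htS
            rw [degS] at this
            omega
        have hszr' : degS G S' a < (L' a).card := by
          rw [degS, hfilter2 a, hL'def]
          beta_reduce
          have hcond : G.Adj a b ∨ G.Adj a c' := Or.inl hab
          rw [if_pos hcond, Finset.card_erase_of_mem hα]
          have hbm : b ∈ S.filter (fun w => G.Adj a w) := Finset.mem_filter.2 ⟨hb, hab⟩
          have hcm : c' ∈ (S.filter (fun w => G.Adj a w)).erase b :=
            Finset.mem_erase.2 ⟨hbc.symm, Finset.mem_filter.2 ⟨hc', hac⟩⟩
          rw [Finset.card_erase_of_mem hcm, Finset.card_erase_of_mem hbm]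
          have := hreg a ha
          rw [degS] at this
          omega
        obtain ⟨c, hc1, hc2⟩ := greedyConn G L' haS'
          (fun t ht => hDconn a haS' t ht) hsz' hszr'
        refine ⟨fun t => if t = b ∨ t = c' then α else c t, ?_, ?_⟩
        · intro t ht
          show (if t = b ∨ t = c' then α else c t) ∈ L t
          by_cases h : t = b ∨ t = c'
          · rw [if_pos h, hconst t ht]; exact hα
          · rw [if_neg h]
            push_neg at h
            have htS' : t ∈ S' := (hmemS' t).2 ⟨ht, h.1, h.2⟩
            have := hc1 t htS'
            rw [hL'def] at this
            rw [hconst t ht]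
            by_cases hcond : G.Adj t b ∨ G.Adj t c'
            · simp only [if_pos hcond] at this
              exact Finset.mem_of_mem_erase this
            · simpa [if_neg hcond] using this
        · intro t ht w hw htw
          show (if t = b ∨ t = c' then α else c t) ≠ (if w = b ∨ w = c' then α else c w)
          by_cases h1 : t = b ∨ t = c' <;> by_cases h2 : w = b ∨ w = c'
          · exfalso
            rcases h1 with rfl | rfl <;> rcases h2 with rfl | rfl
            · exact G.irrefl htw
            · exact hnadjbc htw
            · exact hnadjbc htw.symm
            · exact G.irrefl htw
          · rw [if_pos h1, if_neg h2]
            push_neg at h2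
            have hwS' : w ∈ S' := (hmemS' w).2 ⟨hw, h2.1, h2.2⟩
            have := hc1 w hwS'
            rw [hL'def] at this
            have hcond : G.Adj w b ∨ G.Adj w c' := by
              rcases h1 with rfl | rfl
              · exact Or.inl htw.symm
              · exact Or.inr htw.symm
            simp only [if_pos hcond] at this
            exact fun h => (Finset.ne_of_mem_erase this) h.symm
          · rw [if_neg h1, if_pos h2]
            push_neg at h1
            have htS' : t ∈ S' := (hmemS' t).2 ⟨ht, h1.1, h1.2⟩
            have := hc1 t htS'
            rw [hL'def] at this
            have hcond : G.Adj t b ∨ G.Adj t c' := by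
              rcases h2 with rfl | rfl
              · exact Or.inl htw
              · exact Or.inr htw
            simp only [if_pos hcond] at this
            exact Finset.ne_of_mem_erase this
          · rw [if_neg h1, if_neg h2]
            push_neg at h1 h2
            exact hc2 t ((hmemS' t).2 ⟨ht, h1.1, h1.2⟩) w ((hmemS' w).2 ⟨hw, h2.1, h2.2⟩) htw

/-- generic: connected graphs have one component -/
theorem numComp_eq_one {X : Type} {H : SimpleGraph X} (h : H.Connected) :
    numComponents H = 1 := by
  have hne : Nonempty X := h.nonempty
  have hsub : Subsingleton H.ConnectedComponent := by
    constructor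
    intro c d
    refine SimpleGraph.ConnectedComponent.ind₂ ?_ c d
    intro v w
    exact SimpleGraph.ConnectedComponent.sound (h.preconnected v w)
  exact Nat.card_eq_one_iff_unique.2 ⟨hsub, ⟨H.connectedComponentMk hne.some⟩⟩

theorem reachable_of_numComp_le_one {X : Type} [Finite X] {H : SimpleGraph X}
    (h : numComponents H ≤ 1) (x y : X) : H.Reachable x y := by
  have : Subsingleton H.ConnectedComponent :=
    Finite.card_le_one_iff_subsingleton.1 h
  exact SimpleGraph.ConnectedComponent.exact (Subsingleton.elim _ _)

theorem numComp_le_of_le {X : Type} [Finite X] {H₁ H₂ : SimpleGraph X} (h : H₁ ≤ H₂) :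
    numComponents H₂ ≤ numComponents H₁ := by
  have hsurj : Function.Surjective
      (SimpleGraph.ConnectedComponent.map (SimpleGraph.Hom.ofLE h)) := by
    intro c
    refine SimpleGraph.ConnectedComponent.ind (fun v => ?_) c
    exact ⟨H₁.connectedComponentMk v, rfl⟩
  exact Nat.card_le_card_of_surjective _ hsurj

theorem wk_of_walk {X : Type} {H : SimpleGraph X} (π : X → V) (A : Finset V)
    (hadj : ∀ a b, H.Adj a b → G.Adj (π a) (π b)) (hmem : ∀ a, π a ∈ A)
    {a b : X} (h : H.Walk a b) : Wk G A (π a) (π b) := by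
  induction h with
  | nil => exact Relation.ReflTransGen.refl
  | cons h' p ih => exact Relation.ReflTransGen.head ⟨hadj _ _ h', hmem _, hmem _⟩ ih


end GallaiAux

open GallaiAux in
/-- (Gallai) In a critical graph with chromatic number `k+1`
(`k ≥ 1`), every block of the low-vertex subgraph (induced by vertices of
degree `k`) is complete or an odd cycle. -/
theorem gallai_low_vertex_blocks {V : Type} [Fintype V] (G : SimpleGraph V)
    [DecidableRel G.Adj] (k : ℕ) (hk : 1 ≤ k)
    (hcrit : IsCritical G) (hchi : G.chromaticNumber = (↑(k + 1) : ℕ∞)) :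
    ∀ B : (G.induce {v : V | G.degree v = k}).Subgraph,
      IsBlock (G.induce {v : V | G.degree v = k}) B →
      (∃ n : ℕ, IsCompleteOfOrder B.coe n) ∨ IsOddCycle B.coe := by
  classical
  intro B hB
  obtain ⟨hBconn, hBnocut, hBmax⟩ := hB
  -- Step 1 : B is an induced subgraph (by maximality)
  let B' : (G.induce {v : V | G.degree v = k}).Subgraph :=
    { verts := B.verts
      Adj := fun a b => a ∈ B.verts ∧ b ∈ B.verts ∧ (G.induce {v : V | G.degree v = k}).Adj a b
      adj_sub := fun h => h.2.2
      edge_vert := fun h => h.1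
      symm := ⟨fun a b h => ⟨h.2.1, h.1, h.2.2.symm⟩⟩ }
  have hBle : B ≤ B' :=
    ⟨subset_rfl, fun a b hab => ⟨B.edge_vert hab, B.edge_vert hab.symm, B.adj_sub hab⟩⟩
  have hle : B.coe ≤ B'.coe := by
    intro a b hab
    exact ⟨a.2, b.2, B.adj_sub hab⟩
  have hB'conn : B'.coe.Connected := hBconn.mono hle
  have hB'nocut : HasNoCutVertex B'.coe := by
    intro v hsep
    apply hBnocut v
    unfold IsSepVertexSet at hsep ⊢
    have h1 : numComponents B.coe = 1 := numComp_eq_one hBconn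
    have h1' : numComponents B'.coe = 1 := numComp_eq_one hB'conn
    have hle2 : (B.coe.induce ({v}ᶜ : Set _)) ≤ (B'.coe.induce ({v}ᶜ : Set _)) := by
      intro a b hab
      exact hle hab
    have h3 := numComp_le_of_le hle2
    omega
  have hBeq : B' = B := hBmax B' hBle hB'conn hB'nocut
  have hInd : ∀ a b : ↥{v : V | G.degree v = k}, a ∈ B.verts → b ∈ B.verts →
      G.Adj a.1 b.1 → B.Adj a b := by
    intro a b ha hb hadj
    have h : B'.Adj a b := ⟨ha, hb, hadj⟩
    rw [hBeq] at h
    exact h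
  -- Step 2 : move everything to the vertex level
  let S : Finset V := Finset.univ.filter
    (fun v => ∃ h : v ∈ {v : V | G.degree v = k}, (⟨v, h⟩ : ↥{v : V | G.degree v = k}) ∈ B.verts)
  have hmemS : ∀ v : V, v ∈ S ↔
      ∃ h : v ∈ {v : V | G.degree v = k}, (⟨v, h⟩ : ↥{v : V | G.degree v = k}) ∈ B.verts := by
    intro v
    simp only [S, Finset.mem_filter, Finset.mem_univ, true_and]
  have hmemS' : ∀ a : ↥B.verts, a.1.1 ∈ S := by
    intro a
    refine (hmemS _).2 ⟨a.1.2, ?_⟩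
    have h : (⟨a.1.1, a.1.2⟩ : ↥{v : V | G.degree v = k}) = a.1 := rfl
    rw [h]
    exact a.2
  have hdegk : ∀ v ∈ S, G.degree v = k := fun v hv => ((hmemS v).1 hv).choose
  have hπadj : ∀ a b : ↥B.verts, B.coe.Adj a b → G.Adj a.1.1 b.1.1 := fun a b h => B.adj_sub h
  have hconnS : ConnA G S := by
    intro x hx y hy
    obtain ⟨hxW, hxB⟩ := (hmemS x).1 hx
    obtain ⟨hyW, hyB⟩ := (hmemS y).1 hy
    obtain ⟨w⟩ := hBconn.preconnected ⟨⟨x, hxW⟩, hxB⟩ ⟨⟨y, hyW⟩, hyB⟩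
    exact wk_of_walk G (fun a : ↥B.verts => a.1.1) S hπadj hmemS' w
  have h2S : ∀ u ∈ S, ConnA G (S.erase u) := by
    intro u hu
    obtain ⟨huW, huB⟩ := (hmemS u).1 hu
    set u' : ↥B.verts := ⟨⟨u, huW⟩, huB⟩ with hu'def
    have hnc := hBnocut u'
    unfold IsSepVertexSet at hnc
    push_neg at hnc
    have h1 : numComponents B.coe = 1 := numComp_eq_one hBconn
    have hle1 : numComponents (B.coe.induce ({u'}ᶜ : Set ↥B.verts)) ≤ 1 := by omega
    intro x hx y hy
    obtain ⟨hxu, hxS⟩ := Finset.mem_erase.1 hx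
    obtain ⟨hyu, hyS⟩ := Finset.mem_erase.1 hy
    obtain ⟨hxW, hxB⟩ := (hmemS x).1 hxS
    obtain ⟨hyW, hyB⟩ := (hmemS y).1 hyS
    have hx'mem : (⟨⟨x, hxW⟩, hxB⟩ : ↥B.verts) ∈ ({u'}ᶜ : Set ↥B.verts) := by
      intro h
      exact hxu (congrArg (fun t : ↥B.verts => t.1.1) h)
    have hy'mem : (⟨⟨y, hyW⟩, hyB⟩ : ↥B.verts) ∈ ({u'}ᶜ : Set ↥B.verts) := by
      intro h
      exact hyu (congrArg (fun t : ↥B.verts => t.1.1) h)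
    obtain ⟨w⟩ := reachable_of_numComp_le_one hle1 ⟨_, hx'mem⟩ ⟨_, hy'mem⟩
    refine wk_of_walk G (fun a : ↥({u'}ᶜ : Set ↥B.verts) => a.1.1.1) (S.erase u) ?_ ?_ w
    · intro a b hab
      exact B.adj_sub hab
    · intro a
      refine Finset.mem_erase.2 ⟨?_, hmemS' a.1⟩
      intro h
      exact a.2 (Subtype.ext (Subtype.ext h))
  -- Step 3 : main case split
  by_cases hcomp : ∀ p ∈ S, ∀ q ∈ S, p ≠ q → G.Adj p q
  · left
    refine ⟨Nat.card ↥B.verts, rfl, ?_⟩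
    intro a b hab
    have h1 : a.1.1 ≠ b.1.1 := fun h => hab (Subtype.ext (Subtype.ext h))
    exact hInd a.1 b.1 a.2 b.2 (hcomp _ (hmemS' a) _ (hmemS' b) h1)
  · push_neg at hcomp
    obtain ⟨p, hp, q, hq, hpq, hnadj⟩ := hcomp
    have hcard3 : 3 ≤ S.card := by
      rcases Relation.ReflTransGen.cases_head (hconnS p hp q hq) with h | ⟨w, hrel, _⟩
      · exact absurd h hpq
      · by_cases hwq : w = q
        · exact absurd (hwq ▸ hrel.1) hnadj
        · have hpw : p ≠ w := fun h => G.irrefl (h ▸ hrel.1)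
          have hsub : ({p, w, q} : Finset V) ⊆ S := by
            intro t ht
            simp only [Finset.mem_insert, Finset.mem_singleton] at ht
            rcases ht with rfl | rfl | rfl
            · exact hp
            · exact hrel.2.2
            · exact hq
          have h3 : ({p, w, q} : Finset V).card = 3 :=
            Finset.card_eq_three.2 ⟨p, w, q, hpw, hpq, hwq, rfl⟩
          rw [← h3]
          exact Finset.card_le_card hsub
    -- Step 4 : color the outside by criticality
    let GC : G.Subgraph :=
      { verts := {v : V | v ∉ S}
        Adj := fun a b => G.Adj a b ∧ a ∉ S ∧ b ∉ S
        adj_sub := fun h => h.1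
        edge_vert := fun h => h.2.1
        symm := ⟨fun a b h => ⟨h.1.symm, h.2.2, h.2.1⟩⟩ }
    have hGCne : GC ≠ ⊤ := by
      intro h
      have hmem : p ∈ GC.verts := by
        rw [h, SimpleGraph.Subgraph.verts_top]
        exact Set.mem_univ p
      exact hmem hp
    have hχ := hcrit GC hGCne
    rw [hchi] at hχ
    have hcast : ((k + 1 : ℕ) : ℕ∞) = (k : ℕ∞) + 1 := by push_cast; ring
    rw [hcast] at hχ
    have hcol : GC.coe.Colorable k := by
      rw [← SimpleGraph.chromaticNumber_le_iff_colorable]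
      exact (ENat.lt_add_one_iff (by simp)).1 hχ
    obtain ⟨φ⟩ := hcol
    let φ' : V → ℕ := fun v => if h : v ∉ S then (φ ⟨v, h⟩ : Fin k).1 else 0
    have hφ'lt : ∀ v, v ∉ S → φ' v < k := by
      intro v hv
      simp only [φ', dif_pos hv]
      exact (φ ⟨v, hv⟩).2
    have hφ'proper : ∀ a b, a ∉ S → b ∉ S → G.Adj a b → φ' a ≠ φ' b := by
      intro a b ha hb hadj h
      have hvalid : φ ⟨a, ha⟩ ≠ φ ⟨b, hb⟩ := φ.valid (⟨hadj, ha, hb⟩ :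
        GC.coe.Adj ⟨a, ha⟩ ⟨b, hb⟩)
      apply hvalid
      apply Fin.ext
      simpa only [φ', dif_pos ha, dif_pos hb] using h
    let L : V → Finset ℕ := fun v =>
      (Finset.range k) \ ((Finset.univ.filter (fun w => G.Adj v w ∧ w ∉ S)).image φ')
    have hLsize : ∀ v ∈ S, degS G S v ≤ (L v).card := by
      intro v hv
      have hdeg : (Finset.univ.filter (fun w => G.Adj v w)).card = k := by
        rw [← SimpleGraph.neighborFinset_eq_filter]
        exact hdegk v hv
      have hsplit := Finset.card_filter_add_card_filter_not
        (s := Finset.univ.filter (fun w => G.Adj v w)) (p := fun w => w ∈ S)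
      have hin : (Finset.univ.filter (fun w => G.Adj v w)).filter (fun w => w ∈ S)
          = S.filter (fun w => G.Adj v w) := by
        ext w
        simp only [Finset.mem_filter, Finset.mem_univ, true_and]
        tauto
      have hout : (Finset.univ.filter (fun w => G.Adj v w)).filter (fun w => ¬ w ∈ S)
          = Finset.univ.filter (fun w => G.Adj v w ∧ w ∉ S) := by
        ext w
        simp only [Finset.mem_filter, Finset.mem_univ, true_and]
      have himg := Finset.card_image_le
        (s := Finset.univ.filter (fun w => G.Adj v w ∧ w ∉ S)) (f := φ')
      have hsd := Finset.le_card_sdiff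
        ((Finset.univ.filter (fun w => G.Adj v w ∧ w ∉ S)).image φ') (Finset.range k)
      rw [Finset.card_range] at hsd
      rw [hin, hout] at hsplit
      have hdS : degS G S v = (S.filter (fun w => G.Adj v w)).card := rfl
      have hLv : (L v).card = ((Finset.range k) \
          ((Finset.univ.filter (fun w => G.Adj v w ∧ w ∉ S)).image φ')).card := rfl
      omega
    rcases main2conn G L hcard3 hconnS h2S hLsize hp hq hpq hnadj with
      ⟨c, hc1, hc2⟩ | ⟨hdeg2, hodd⟩
    · exfalso
      have hbound : ∀ v, (if v ∈ S then c v else φ' v) < k := by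
        intro v
        by_cases hv : v ∈ S
        · rw [if_pos hv]
          exact Finset.mem_range.1 (Finset.mem_sdiff.1 (hc1 v hv)).1
        · rw [if_neg hv]
          exact hφ'lt v hv
      have hvalid : ∀ a b, G.Adj a b →
          (if a ∈ S then c a else φ' a) ≠ (if b ∈ S then c b else φ' b) := by
        intro a b hadj
        by_cases ha : a ∈ S <;> by_cases hb : b ∈ S
        · rw [if_pos ha, if_pos hb]
          exact hc2 a ha b hb hadj
        · rw [if_pos ha, if_neg hb]
          have hmem : φ' b ∈ (Finset.univ.filter (fun w => G.Adj a w ∧ w ∉ S)).image φ' :=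
            Finset.mem_image_of_mem _ (Finset.mem_filter.2 ⟨Finset.mem_univ b, hadj, hb⟩)
          have hnot := (Finset.mem_sdiff.1 (hc1 a ha)).2
          intro h
          exact hnot (h ▸ hmem)
        · rw [if_neg ha, if_pos hb]
          have hmem : φ' a ∈ (Finset.univ.filter (fun w => G.Adj b w ∧ w ∉ S)).image φ' :=
            Finset.mem_image_of_mem _ (Finset.mem_filter.2 ⟨Finset.mem_univ a, hadj.symm, ha⟩)
          have hnot := (Finset.mem_sdiff.1 (hc1 b hb)).2
          intro h
          exact hnot (h ▸ hmem)
        · rw [if_neg ha, if_neg hb]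
          exact hφ'proper a b ha hb hadj
      have hcolor : G.Colorable k := by
        refine ⟨SimpleGraph.Coloring.mk
          (fun v => ⟨(if v ∈ S then c v else φ' v), hbound v⟩) ?_⟩
        intro a b hadj h
        exact hvalid a b hadj (congrArg Fin.val h)
      have hle := hcolor.chromaticNumber_le
      rw [hchi] at hle
      have : (k + 1 : ℕ) ≤ k := by exact_mod_cast hle
      omega
    · right
      obtain ⟨f, hfS, hfadj, hper, hinj, hchar, hpair0, hsurj⟩ :=
        cycleEnum G hconnS hcard3 hdeg2
      set n := S.card with hndef
      haveI : NeZero n := ⟨by omega⟩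
      refine ⟨n, hodd, hcard3, ?_⟩
      have hW : ∀ i : ℕ, f i ∈ {v : V | G.degree v = k} :=
        fun i => ((hmemS (f i)).1 (hfS i)).choose
      have hBv : ∀ i : ℕ, (⟨f i, hW i⟩ : ↥{v : V | G.degree v = k}) ∈ B.verts := by
        intro i
        exact ((hmemS (f i)).1 (hfS i)).choose_spec
      set e : ZMod n → ↥B.verts := fun i => ⟨⟨f i.val, hW i.val⟩, hBv i.val⟩ with hedef
      have hcastval : ∀ x : ZMod n, ((x.val : ℕ) : ZMod n) = x :=
        fun x => ZMod.natCast_rightInverse x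
      have heinj : Function.Injective e := by
        intro i j h
        have h1 : f i.val = f j.val := congrArg (fun t : ↥B.verts => t.1.1) h
        have h2 : i.val = j.val := hinj _ _ (ZMod.val_lt i) (ZMod.val_lt j) h1
        rw [← hcastval i, ← hcastval j, h2]
      have hesurj : Function.Surjective e := by
        intro b
        obtain ⟨i, hi, hieq⟩ := hsurj b.1.1 (hmemS' b)
        refine ⟨(i : ZMod n), ?_⟩
        apply Subtype.ext
        apply Subtype.ext
        show f ((i : ZMod n)).val = b.1.1
        rw [ZMod.val_cast_of_lt hi]
        exact hieq
      have hadjNat : ∀ (a b : ℕ), a < n → b < n → G.Adj (f a) (f b) →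
          ((b : ZMod n) = (a : ZMod n) + 1 ∨ (a : ZMod n) = (b : ZMod n) + 1) := by
        intro a b ha hb hadj
        rcases Nat.eq_zero_or_pos a with rfl | hapos
        · rcases hpair0 (f b) (hfS b) hadj with h | h
          · have hb1 : b = 1 := hinj b 1 hb (by omega) h
            subst hb1
            left
            simp
          · have hbn : b = n - 1 := hinj b (n-1) hb (by omega) h
            subst hbn
            right
            rw [Nat.cast_zero]
            have hh : ((n - 1 : ℕ) : ZMod n) + 1 = ((n - 1 + 1 : ℕ) : ZMod n) := by
              push_cast
              ring
            rw [hh, Nat.sub_add_cancel (by omega), ZMod.natCast_self]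
        · have hcent := hchar (a - 1) (f b) (hfS b)
          rw [Nat.sub_add_cancel hapos] at hcent
          rcases hcent hadj with h | h
          · have hba : b = a - 1 := hinj b (a-1) hb (by omega) h
            subst hba
            right
            have hh : ((a - 1 : ℕ) : ZMod n) + 1 = ((a - 1 + 1 : ℕ) : ZMod n) := by
              push_cast
              ring
            rw [hh, Nat.sub_add_cancel hapos]
          · have hidx : a - 1 + 2 = a + 1 := by omega
            rw [hidx] at h
            rcases Nat.lt_or_ge (a+1) n with h' | h'
            · have hba : b = a + 1 := hinj b (a+1) hb h' h
              subst hba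
              left
              push_cast
              ring
            · have han : a + 1 = n := by omega
              rw [han, hper] at h
              have hb0 : b = 0 := hinj b 0 hb (by omega) h
              subst hb0
              left
              rw [Nat.cast_zero,
                show ((a : ZMod n) + 1) = ((a+1 : ℕ) : ZMod n) by push_cast; ring,
                han, ZMod.natCast_self]
      have hcast1 : ∀ i : ZMod n, (i + 1) = ((i.val + 1 : ℕ) : ZMod n) := by
        intro i
        conv_lhs => rw [← hcastval i]
        push_cast
        ring
      have hadjZ : ∀ i : ZMod n, G.Adj (f i.val) (f (i+1).val) := by
        intro i
        rcases Nat.lt_or_ge (i.val + 1) n with h' | h'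
        · have hv : (i+1).val = i.val + 1 := by
            rw [hcast1 i, ZMod.val_cast_of_lt h']
          rw [hv]
          exact hfadj i.val
        · have hn : i.val + 1 = n := by
            have := ZMod.val_lt i
            omega
          have hv : (i+1).val = 0 := by
            rw [hcast1 i, hn, ZMod.natCast_self]
            exact ZMod.val_zero
          rw [hv, ← hper]
          have := hfadj i.val
          rwa [hn] at this
      refine ⟨SimpleGraph.Iso.symm ⟨Equiv.ofBijective e ⟨heinj, hesurj⟩, ?_⟩⟩
      intro i j
      constructor
      · intro h
        have hG : G.Adj (f i.val) (f j.val) := B.adj_sub h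
        have hne : i ≠ j := by
          rintro rfl
          exact G.irrefl hG
        have hor := hadjNat i.val j.val (ZMod.val_lt i) (ZMod.val_lt j) hG
        rw [hcastval i, hcastval j] at hor
        rw [cycleGraphZ, SimpleGraph.fromRel_adj]
        exact ⟨hne, hor⟩
      · intro h
        rw [cycleGraphZ, SimpleGraph.fromRel_adj] at h
        obtain ⟨hne, hor⟩ := h
        have hG : G.Adj (f i.val) (f j.val) := by
          rcases hor with rfl | rfl
          · exact hadjZ i
          · exact (hadjZ j).symm
        exact hInd _ _ (hBv i.val) (hBv j.val) hG

end GallaiAuxSection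
end
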